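/- arXiv:math/9811102 — 6 statements merged into one kernel-verified Lean document; each statement's English description precedes it below -/
import Mathlib

section
/- Let $G$ be a finite group. Every torsion element of the group of singular orbit data $\mathbb{B}_G$ has order dividing 2; more precisely, if $\alpha\in\mathbb{B}_G$ satisfies $n\cdot\alpha=0$ for some integer $n\ge 1$, then already $2\cdot\alpha=0$. -/
open Finsupp

/-- The natural map from conjugacy classes of `G` to the abelianization of `G`. -/
def conjToAb {G : Type*} [Group G] : ConjClasses G → Abelianization G :=
  Quotient.lift Abelianization.of (fun a b (h : IsConj a b) => by
    obtain ⟨c, hc⟩ := h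
    have : Abelianization.of (c * a) = Abelianization.of (b * c) := by
      rw [hc.eq]
    simpa [map_mul, mul_comm] using this)

@[simp] lemma conjToAb_mk {G : Type*} [Group G] (a : G) :
    conjToAb (ConjClasses.mk a) = Abelianization.of a := rfl

/-- The degree map sending a formal `ℤ`-combination of conjugacy classes to the corresponding
product in the abelianization. -/
noncomputable def degMap (G : Type*) [Group G] :
    (ConjClasses G →₀ ℤ) →+ Additive (Abelianization G) :=
  Finsupp.liftAddHom (fun c => (zmultiplesHom _) (Additive.ofMul (conjToAb c)))

@[simp] lemma degMap_single {G : Type*} [Group G] (a : G) (k : ℤ) :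
    degMap G (Finsupp.single (ConjClasses.mk a) k)
      = k • (Additive.ofMul (Abelianization.of a)) := by
  simp [degMap]

/-- `lambdaKer G` consists of the formal `ℤ`-combinations of conjugacy classes whose product
lies in the commutator subgroup; these are the (differences of) singular orbit data. -/
noncomputable def lambdaKer (G : Type*) [Group G] : AddSubgroup (ConjClasses G →₀ ℤ) :=
  (degMap G).ker

/-- The subgroup of relations: the class of the identity, and the cancelling pairs
`[γ̂, γ̂⁻¹]`. -/
noncomputable def bRel (G : Type*) [Group G] : AddSubgroup (ConjClasses G →₀ ℤ) :=
  AddSubgroup.closure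
    (insert (Finsupp.single (ConjClasses.mk (1 : G)) 1)
      {x | ∃ γ : G, x = Finsupp.single (ConjClasses.mk γ) 1
        + Finsupp.single (ConjClasses.mk γ⁻¹) 1})

/-- The group of singular orbit data `𝔹_G`. -/
abbrev BG (G : Type*) [Group G] :=
  (lambdaKer G) ⧸ ((bRel G).addSubgroupOf (lambdaKer G))

/-- The formal sum of conjugacy classes corresponding to a finite (multi)set of group
elements, presented as a list. -/
noncomputable def bdatum (G : Type*) [Group G] (l : List G) : ConjClasses G →₀ ℤ :=
  (l.map (fun γ => Finsupp.single (ConjClasses.mk γ) (1 : ℤ))).sum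

lemma degMap_bdatum {G : Type*} [Group G] (l : List G) :
    degMap G (bdatum G l) = Additive.ofMul (Abelianization.of l.prod) := by
  induction l with
  | nil => simp [bdatum]
  | cons a t ih =>
      have : bdatum G (a :: t) = Finsupp.single (ConjClasses.mk a) 1 + bdatum G t := by
        simp [bdatum]
      rw [this, map_add, ih, degMap_single]
      simp [← ofMul_mul]

lemma bdatum_mem_lambdaKer {G : Type*} [Group G] (l : List G)
    (h : l.prod ∈ commutator G) : bdatum G l ∈ lambdaKer G := by
  have : Abelianization.of l.prod = 1 := (QuotientGroup.eq_one_iff _).2 h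
  simp [lambdaKer, AddMonoidHom.mem_ker, degMap_bdatum, this]

lemma bdatum_mem_lambdaKer_of_prod_eq_one {G : Type*} [Group G] (l : List G)
    (h : l.prod = 1) : bdatum G l ∈ lambdaKer G :=
  bdatum_mem_lambdaKer l (by simp [h, Subgroup.one_mem])

/-- The element of `𝔹_G` determined by a list of group elements whose product lies in the
commutator subgroup. -/
noncomputable def bmk {G : Type*} [Group G] (l : List G) (h : bdatum G l ∈ lambdaKer G) :
    BG G :=
  QuotientAddGroup.mk (⟨bdatum G l, h⟩ : lambdaKer G)

/-- Inversion on conjugacy classes. -/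
def cinv {G : Type*} [Group G] : ConjClasses G → ConjClasses G :=
  Quotient.lift (fun a => ConjClasses.mk a⁻¹) (fun a b (h : IsConj a b) => by
    apply ConjClasses.mk_eq_mk_iff_isConj.2
    obtain ⟨c, hc⟩ := h
    refine ⟨c, ?_⟩
    have := hc.eq
    have h2 : a⁻¹ * (↑c)⁻¹ = (↑c)⁻¹ * b⁻¹ := by
      rw [← mul_inv_rev, ← mul_inv_rev, this]
    show ↑c * a⁻¹ = b⁻¹ * ↑c
    calc ↑c * a⁻¹ = ↑c * (a⁻¹ * (↑c)⁻¹) * ↑c := by group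
      _ = ↑c * ((↑c)⁻¹ * b⁻¹) * ↑c := by rw [h2]
      _ = b⁻¹ * ↑c := by group)

@[simp] lemma cinv_mk {G : Type*} [Group G] (a : G) :
    cinv (ConjClasses.mk a) = ConjClasses.mk a⁻¹ := rfl

/-- The induced involution on formal sums of conjugacy classes. -/
noncomputable def invF (G : Type*) [Group G] :
    (ConjClasses G →₀ ℤ) →+ (ConjClasses G →₀ ℤ) :=
  Finsupp.mapDomain.addMonoidHom cinv

@[simp] lemma invF_single {G : Type*} [Group G] (a : G) (k : ℤ) :
    invF G (Finsupp.single (ConjClasses.mk a) k)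
      = Finsupp.single (ConjClasses.mk a⁻¹) k := by
  simp [invF, Finsupp.mapDomain.addMonoidHom_apply, Finsupp.mapDomain_single]

lemma invF_fixed_of_mem_bRel {G : Type*} [Group G] {y : ConjClasses G →₀ ℤ}
    (hy : y ∈ bRel G) : invF G y = y := by
  refine AddSubgroup.closure_induction ?_ (by simp) ?_ ?_ hy
  · rintro x (rfl | ⟨γ, rfl⟩)
    · simp
    · simp [add_comm]
  · intro a b _ _ ha hb; simp [map_add, ha, hb]
  · intro a _ ha; simp [map_neg, ha]

lemma add_invF_mem_bRel {G : Type*} [Group G] (x : ConjClasses G →₀ ℤ) :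
    x + invF G x ∈ bRel G := by
  induction x using Finsupp.induction with
  | zero => simp [AddSubgroup.zero_mem]
  | single_add a k f _ _ ih =>
      obtain ⟨γ, rfl⟩ := a.exists_rep
      have hgen : Finsupp.single (ConjClasses.mk γ) 1
          + Finsupp.single (ConjClasses.mk γ⁻¹) 1 ∈ bRel G :=
        AddSubgroup.subset_closure (Or.inr ⟨γ, rfl⟩)
      have h1 : Finsupp.single (ConjClasses.mk γ) k
          + Finsupp.single (ConjClasses.mk γ⁻¹) k
          = k • (Finsupp.single (ConjClasses.mk γ) 1
              + Finsupp.single (ConjClasses.mk γ⁻¹) 1) := by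
        simp [Finsupp.smul_single]
      have h2 : Finsupp.single (ConjClasses.mk γ) k
          + Finsupp.single (ConjClasses.mk γ⁻¹) k ∈ bRel G := by
        rw [h1]; exact AddSubgroup.zsmul_mem _ hgen k
      have : (Finsupp.single (ConjClasses.mk γ) k + f)
          + invF G (Finsupp.single (ConjClasses.mk γ) k + f)
          = (Finsupp.single (ConjClasses.mk γ) k
              + Finsupp.single (ConjClasses.mk γ⁻¹) k) + (f + invF G f) := by
        rw [map_add, invF_single]; abel
      rw [this]
      exact AddSubgroup.add_mem _ h2 ih

/-- For a finite group `G`, every torsion element of `𝔹_G` has order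
dividing 2: if `n • α = 0` for some `n ≥ 1`, then already `2 • α = 0`. -/
theorem torsion_of_BG_is_two_torsion (G : Type*) [Group G] [Finite G]
    (α : BG G) (n : ℕ) (hn : 1 ≤ n) (h : n • α = 0) : 2 • α = 0 := by
  induction α using QuotientAddGroup.induction_on with
  | H x =>
    obtain ⟨x, hx⟩ := x
    have hmem : ((n • (⟨x, hx⟩ : lambdaKer G) : lambdaKer G) : ConjClasses G →₀ ℤ) ∈ bRel G := by
      have := (QuotientAddGroup.eq_zero_iff _).1
        (by rw [QuotientAddGroup.mk_nsmul ((bRel G).addSubgroupOf (lambdaKer G))]; exact h)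
      exact (AddSubgroup.mem_addSubgroupOf).1 this
    have hnx : (n • x : ConjClasses G →₀ ℤ) ∈ bRel G := by simpa using hmem
    have hfix : invF G x = x := by
      have h1 : invF G (n • x) = n • x := invF_fixed_of_mem_bRel hnx
      rw [map_nsmul] at h1
      have hn0 : (n : ℤ) ≠ 0 := by positivity
      ext a
      have := congrFun (congrArg (fun z => Finsupp.toFun z) h1) a
      have h2 : (n : ℤ) * (invF G x) a = (n : ℤ) * x a := by
        have := Finsupp.ext_iff.1 h1 a
        simpa using this
      exact mul_left_cancel₀ hn0 h2
    have h2x : (2 • x : ConjClasses G →₀ ℤ) ∈ bRel G := by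
      have := add_invF_mem_bRel x
      rwa [hfix, ← two_nsmul] at this
    have : ((2 • (⟨x, hx⟩ : lambdaKer G) : lambdaKer G) : ConjClasses G →₀ ℤ) ∈ bRel G := by
      simpa using h2x
    have : (2 • (⟨x, hx⟩ : lambdaKer G)) ∈ (bRel G).addSubgroupOf (lambdaKer G) :=
      (AddSubgroup.mem_addSubgroupOf).2 this
    rw [← QuotientAddGroup.mk_nsmul ((bRel G).addSubgroupOf (lambdaKer G))]
    exact (QuotientAddGroup.eq_zero_iff _).2 this
end

section
/- For every finite group $G$, the group of singular orbit data $\mathbb{B}_G$ is a finitely generated abelian group isomorphic to $\mathbb{Z}^a\times(\mathbb{Z}/2\mathbb{Z})^b$ for some natural numbers $a$ and $b$, i.e. it is a direct sum of finitely many copies of $\mathbb{Z}$ and finitely many copies of $\mathbb{Z}/2\mathbb{Z}$. -/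
open Finsupp

section AuxInv

variable {G : Type*} [Group G]

/-- Inversion on conjugacy classes. -/
noncomputable def invC : ConjClasses G → ConjClasses G :=
  Quotient.map (·⁻¹) fun a b h => by
    obtain ⟨c, hc⟩ := h
    exact ⟨c, hc.inv_right⟩

@[simp] lemma invC_mk (a : G) : invC (ConjClasses.mk a) = ConjClasses.mk a⁻¹ := rfl

@[simp] lemma invC_invC (c : ConjClasses G) : invC (invC c) = c := by
  obtain ⟨a, rfl⟩ := ConjClasses.mk_surjective c
  simp

/-- The additive map `f ↦ f ∘ invC` on formal sums. -/
noncomputable def sigmaHom (G : Type*) [Group G] :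
    (ConjClasses G →₀ ℤ) →+ (ConjClasses G →₀ ℤ) :=
  Finsupp.mapDomain.addMonoidHom invC

@[simp] lemma sigmaHom_single (c : ConjClasses G) (k : ℤ) :
    sigmaHom G (Finsupp.single c k) = Finsupp.single (invC c) k :=
  Finsupp.mapDomain_single

lemma pair_mem_bRel (γ : G) (k : ℤ) :
    Finsupp.single (ConjClasses.mk γ) k + Finsupp.single (ConjClasses.mk γ⁻¹) k ∈ bRel G := by
  have h : (Finsupp.single (ConjClasses.mk γ) 1
      + Finsupp.single (ConjClasses.mk γ⁻¹) 1 : ConjClasses G →₀ ℤ) ∈ bRel G :=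
    AddSubgroup.subset_closure (Set.mem_insert_iff.mpr (Or.inr ⟨γ, rfl⟩))
  have h2 := AddSubgroup.zsmul_mem _ h k
  simpa [smul_add, Finsupp.smul_single] using h2

lemma add_sigmaHom_mem_bRel (f : ConjClasses G →₀ ℤ) : f + sigmaHom G f ∈ bRel G := by
  induction f using Finsupp.induction with
  | zero => simp [AddSubgroup.zero_mem]
  | single_add c k f hc hk ih =>
    have h1 : Finsupp.single c k + sigmaHom G (Finsupp.single c k) ∈ bRel G := by
      obtain ⟨γ, rfl⟩ := ConjClasses.mk_surjective c
      simpa using pair_mem_bRel γ k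
    have heq : Finsupp.single c k + f + (sigmaHom G (Finsupp.single c k) + sigmaHom G f)
        = (Finsupp.single c k + sigmaHom G (Finsupp.single c k)) + (f + sigmaHom G f) := by
      abel
    rw [map_add, heq]
    exact AddSubgroup.add_mem _ h1 ih

lemma sigmaHom_eq_of_mem_bRel {f : ConjClasses G →₀ ℤ} (hf : f ∈ bRel G) :
    sigmaHom G f = f := by
  have hle : bRel G ≤ (sigmaHom G - AddMonoidHom.id _).ker := by
    rw [bRel, AddSubgroup.closure_le]
    rintro x (rfl | ⟨γ, rfl⟩) <;>
      simp [AddMonoidHom.mem_ker, sub_eq_zero, add_comm]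
  have := hle hf
  rw [AddMonoidHom.mem_ker, AddMonoidHom.sub_apply, sub_eq_zero] at this
  exact this

lemma two_nsmul_mem_bRel {f : ConjClasses G →₀ ℤ} {n : ℕ} (hn : 0 < n)
    (h : n • f ∈ bRel G) : (2 : ℕ) • f ∈ bRel G := by
  have hs : sigmaHom G f = f := by
    have h1 : sigmaHom G (n • f) = n • f := sigmaHom_eq_of_mem_bRel h
    rw [map_nsmul] at h1
    ext c
    have := congrArg (fun g : ConjClasses G →₀ ℤ => g c) h1
    simp only [Finsupp.smul_apply, nsmul_eq_mul] at this
    exact mul_left_cancel₀ (by exact_mod_cast hn.ne' : (n : ℤ) ≠ 0) this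
  have h2 := add_sigmaHom_mem_bRel f
  rw [hs] at h2
  rwa [two_nsmul]

lemma BG_torsion_two (x : BG G) {n : ℕ} (hn : 0 < n) (h : n • x = 0) : (2 : ℕ) • x = 0 := by
  induction x using QuotientAddGroup.induction_on with
  | H z =>
    rw [← QuotientAddGroup.mk_nsmul, QuotientAddGroup.eq_zero_iff,
      AddSubgroup.mem_addSubgroupOf] at h ⊢
    exact two_nsmul_mem_bRel hn h

end AuxInv

open scoped DirectSum

/-- For every finite group `G`, the group of singular orbit data `𝔹_G`
is isomorphic to `ℤ^a × (ℤ/2ℤ)^b` for some natural numbers `a` and `b`. -/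
theorem BG_iso_int_pow_prod_zmod_two_pow (G : Type*) [Group G] [Finite G] :
    ∃ a b : ℕ, Nonempty (BG G ≃+ ((Fin a → ℤ) × (Fin b → ZMod 2))) := by
  classical
  haveI : Fintype (ConjClasses G) := Fintype.ofFinite _
  have hfg : ((lambdaKer G).toIntSubmodule).FG := IsNoetherian.noetherian _
  haveI hmf : Module.Finite ℤ ((lambdaKer G).toIntSubmodule) := Module.Finite.iff_fg.mpr hfg
  haveI : AddGroup.FG (lambdaKer G) := Module.Finite.iff_addGroup_fg.mp hmf
  haveI : AddGroup.FG (BG G) := inferInstance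
  obtain ⟨n, ι, fι, p, hp, e, ⟨eq⟩⟩ := AddCommGroup.equiv_free_prod_directSum_zmod (BG G)
  haveI := fι
  haveI : ∀ i, NeZero (p i ^ e i) := fun i => ⟨pow_ne_zero _ (hp i).pos.ne'⟩
  haveI : Finite (⨁ i : ι, ZMod (p i ^ e i)) :=
    Finite.of_equiv _ (DFinsupp.equivFunOnFintype (ι := ι)).symm
  have h2 : ∀ y : (⨁ i : ι, ZMod (p i ^ e i)), (2 : ℕ) • y = 0 := by
    intro y
    set x := eq.symm ((0 : Fin n →₀ ℤ), y) with hxdef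
    have hx : addOrderOf y • x = 0 := by
      apply eq.injective
      rw [map_nsmul, hxdef, eq.apply_symm_apply, map_zero]
      rw [Prod.smul_def, addOrderOf_nsmul_eq_zero, smul_zero]
      rfl
    have h2x := BG_torsion_two x (addOrderOf_pos y) hx
    have h2y : (2 : ℕ) • ((0 : Fin n →₀ ℤ), y) = (0 : (Fin n →₀ ℤ) × _) := by
      have := congrArg eq h2x
      rw [map_nsmul, hxdef, eq.apply_symm_apply, map_zero] at this
      exact this
    have := congrArg Prod.snd h2y
    simpa only [Prod.smul_snd, Prod.snd_zero] using this
  haveI : Module (ZMod 2) (⨁ i : ι, ZMod (p i ^ e i)) := AddCommGroup.zmodModule h2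
  haveI : Module.Finite (ZMod 2) (⨁ i : ι, ZMod (p i ^ e i)) := Module.Finite.of_finite
  refine ⟨n, Module.finrank (ZMod 2) (⨁ i : ι, ZMod (p i ^ e i)),
    ⟨eq.trans (AddEquiv.prodCongr
      (Finsupp.linearEquivFunOnFinite ℤ ℤ (Fin n)).toAddEquiv
      (Module.finBasis (ZMod 2) (⨁ i : ι, ZMod (p i ^ e i))).equivFun.toAddEquiv)⟩⟩
end

section
/- Let $C_n=\langle x\rangle$ be cyclic of order $n$ and $C_l=\langle y\rangle$ cyclic of order $l$ with $l\mid n$, included via $i:C_l\to C_n$, $y\mapsto x^{n/l}$. Then the square formed by $\theta$ and induction commutes: for every $\alpha\in\mathbb{B}_{C_l}$ one has $\theta(\mathbb{B}_i(\alpha))=\widetilde{Ind}^{C_n}_{C_l}(\theta(\alpha))$ in $\widetilde{R_{\mathbb{C}}C_n}$. -/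
open Finsupp

/-- The additive map on formal sums of conjugacy classes induced by a group homomorphism. -/
noncomputable def ccFinsuppMap {H G : Type*} [Group H] [Group G] (f : H →* G) :
    (ConjClasses H →₀ ℤ) →+ (ConjClasses G →₀ ℤ) :=
  Finsupp.mapDomain.addMonoidHom (ConjClasses.map f)

@[simp] lemma ccFinsuppMap_single {H G : Type*} [Group H] [Group G] (f : H →* G)
    (a : H) (k : ℤ) :
    ccFinsuppMap f (Finsupp.single (ConjClasses.mk a) k)
      = Finsupp.single (ConjClasses.mk (f a)) k := by
  simp [ccFinsuppMap, Finsupp.mapDomain_single]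
  rfl

lemma degMap_ccFinsuppMap {H G : Type*} [Group H] [Group G] (f : H →* G)
    (x : ConjClasses H →₀ ℤ) :
    degMap G (ccFinsuppMap f x)
      = MonoidHom.toAdditive (Abelianization.map f) (degMap H x) := by
  have : (degMap G).comp (ccFinsuppMap f)
      = (MonoidHom.toAdditive (Abelianization.map f)).comp (degMap H) := by
    apply Finsupp.addHom_ext
    intro c k
    obtain ⟨a, rfl⟩ := ConjClasses.mk_surjective c
    simp
  exact DFunLike.congr_fun this x

lemma ccFinsuppMap_mem_lambdaKer {H G : Type*} [Group H] [Group G] (f : H →* G)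
    {x : ConjClasses H →₀ ℤ} (hx : x ∈ lambdaKer H) :
    ccFinsuppMap f x ∈ lambdaKer G := by
  have hx' : degMap H x = 0 := hx
  simp [lambdaKer, AddMonoidHom.mem_ker, degMap_ccFinsuppMap, hx']

lemma ccFinsuppMap_bRel_le {H G : Type*} [Group H] [Group G] (f : H →* G) :
    (bRel H).map (ccFinsuppMap f) ≤ bRel G := by
  rw [bRel, AddMonoidHom.map_closure, AddSubgroup.closure_le]
  rintro _ ⟨y, hy, rfl⟩
  rcases hy with h1 | ⟨γ, rfl⟩
  · subst h1
    apply AddSubgroup.subset_closure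
    left
    simp
  · apply AddSubgroup.subset_closure
    right
    exact ⟨f γ, by simp⟩

/-- The functorial homomorphism `𝔹_f : 𝔹_H → 𝔹_G` induced by a group homomorphism
`f : H → G`. -/
noncomputable def BMap {H G : Type*} [Group H] [Group G] (f : H →* G) : BG H →+ BG G :=
  QuotientAddGroup.map _ _
    (((ccFinsuppMap f).comp (lambdaKer H).subtype).codRestrict (lambdaKer G)
      (fun x => ccFinsuppMap_mem_lambdaKer f x.2))
    (by
      intro x hx
      rw [AddSubgroup.mem_addSubgroupOf] at hx
      rw [AddSubgroup.mem_comap, AddSubgroup.mem_addSubgroupOf]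
      exact ccFinsuppMap_bRel_le f (AddSubgroup.mem_map_of_mem _ hx))

/-! ### Virtual characters of abelian groups, permutation characters, and the quotient
`R_ℂ G / E_G` with its conjugation involution. -/

/-- The additive group of virtual complex characters of an abelian group `G`
(`ℤ`-linear combinations of the irreducible characters, which for an abelian group are
exactly the homomorphisms `G → ℂˣ`), as a subgroup of the functions `G → ℂ`. -/
noncomputable def RCa (G : Type*) [CommGroup G] : AddSubgroup (G → ℂ) :=
  AddSubgroup.closure {f | ∃ χ : G →* ℂˣ, f = fun g => (χ g : ℂ)}

/-- The permutation character of the action of `G` on `G ⧸ H`, i.e. the character of the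
representation induced from the trivial character of `H`; its value at `g` is the number
of fixed cosets. -/
noncomputable def permChar {G : Type*} [Group G] (H : Subgroup G) : G → ℂ :=
  fun g => (Nat.card {x : G ⧸ H // g • x = x} : ℂ)

/-- The subgroup of `G → ℂ` generated by the characters induced from the trivial
character of subgroups of `G`. -/
noncomputable def EG (G : Type*) [Group G] : AddSubgroup (G → ℂ) :=
  AddSubgroup.closure {f | ∃ H : Subgroup G, f = permChar H}

/-- The quotient `R_ℂ G / E_G` of the group of virtual characters. -/
abbrev RTilde (G : Type*) [CommGroup G] :=
  (RCa G) ⧸ ((EG G).addSubgroupOf (RCa G))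

/-- Pointwise complex conjugation of functions `G → ℂ`, as an additive homomorphism. -/
def conjFun (G : Type*) : (G → ℂ) →+ (G → ℂ) where
  toFun f := fun g => starRingEnd ℂ (f g)
  map_zero' := by funext g; simp
  map_add' f₁ f₂ := by funext g; simp

lemma conjFun_RCa_le (G : Type*) [CommGroup G] : (RCa G).map (conjFun G) ≤ RCa G := by
  rw [RCa, AddMonoidHom.map_closure, AddSubgroup.closure_le]
  rintro _ ⟨f, ⟨χ, rfl⟩, rfl⟩
  apply AddSubgroup.subset_closure
  refine ⟨(Units.map ((starRingEnd ℂ) : ℂ →* ℂ)).comp χ, ?_⟩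
  funext g
  simp [conjFun]

lemma conjFun_EG_le (G : Type*) [Group G] : (EG G).map (conjFun G) ≤ EG G := by
  rw [EG, AddMonoidHom.map_closure, AddSubgroup.closure_le]
  rintro _ ⟨f, ⟨H, rfl⟩, rfl⟩
  apply AddSubgroup.subset_closure
  refine ⟨H, ?_⟩
  funext g
  simp [conjFun, permChar]

/-- The involution of `R_ℂ G / E_G` induced by complex conjugation of characters. -/
noncomputable def conjQ (G : Type*) [CommGroup G] : RTilde G →+ RTilde G :=
  QuotientAddGroup.map _ _
    (((conjFun G).comp (RCa G).subtype).codRestrict (RCa G)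
      (fun x => conjFun_RCa_le G (AddSubgroup.mem_map_of_mem _ x.2)))
    (by
      intro x hx
      rw [AddSubgroup.mem_addSubgroupOf] at hx
      rw [AddSubgroup.mem_comap, AddSubgroup.mem_addSubgroupOf]
      exact conjFun_EG_le G (AddSubgroup.mem_map_of_mem _ hx))

/-- The subgroup `𝔸_G = {a ∈ R_ℂ G / E_G : a + ā = 0}`. -/
noncomputable def AG (G : Type*) [CommGroup G] : AddSubgroup (RTilde G) :=
  (AddMonoidHom.id (RTilde G) + conjQ G).ker

lemma mem_AG_iff {G : Type*} [CommGroup G] (a : RTilde G) :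
    a ∈ AG G ↔ a + conjQ G a = 0 := Iff.rfl

/-! ### The homomorphism `θ` for cyclic groups. -/

/-- The cyclic group of order `n`, written multiplicatively. -/
abbrev Cyc (n : ℕ) := Multiplicative (ZMod n)

/-- The irreducible character `ρ_j` of the cyclic group `C_n`,
`ρ_j(x^v) = e^{2πi j v / n}`. -/
noncomputable def rho (n : ℕ) (j : ℕ) : Cyc n → ℂ :=
  fun g => Complex.exp (2 * (Real.pi : ℂ) * Complex.I * j * ((Multiplicative.toAdd g).val : ℂ) / n)

/-- For `i, j`, with `k = gcd(n, i)` and `i = l k`, the unique integer `r` with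
`1 ≤ r ≤ n/k` and `r ≡ j l (mod n/k)`. -/
def rVal (n i j : ℕ) : ℕ :=
  if (j * (i / n.gcd i)) % (n / n.gcd i) = 0 then n / n.gcd i
  else (j * (i / n.gcd i)) % (n / n.gcd i)

/-- The virtual character `∑_{j=1}^{n-1} (q - (1/n) ∑_s k_s r_{sj}) ρ_j` associated to the
singular orbit data given by the list `L = [x^{i_1}, …, x^{i_q}]`. -/
noncomputable def thetaFun (n : ℕ) (L : List (Cyc n)) : Cyc n → ℂ :=
  ∑ j ∈ Finset.Ico 1 n,
    ((L.length : ℂ)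
        - (L.map (fun γ => ((n.gcd (Multiplicative.toAdd γ).val
            * rVal n (Multiplicative.toAdd γ).val j : ℕ) : ℂ))).sum / n)
      • rho n j

/-- `θ : 𝔹_{C_n} → R_ℂ C_n / D_{C_n}` is the homomorphism sending the class of a
singular orbit datum `[x^{i_1}, …, x^{i_q}]` to the class of the virtual character
`∑_{j=1}^{n-1} (q - (1/n) ∑_s k_s r_{sj}) ρ_j`. -/
def IsTheta {n : ℕ} (θ : BG (Cyc n) →+ RTilde (Cyc n)) : Prop :=
  ∀ (L : List (Cyc n)) (hL : bdatum (Cyc n) L ∈ lambdaKer (Cyc n)) (r : RCa (Cyc n)),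
    (r : Cyc n → ℂ) = thetaFun n L →
      θ (bmk L hL) = QuotientAddGroup.mk r

/-- The inclusion `C_l → C_n` (for `l ∣ n`) sending the generator `y` of `C_l` to
`x^(n/l)`. -/
noncomputable def cycIncl (n l : ℕ) (hl : l ∣ n) : Cyc l →* Cyc n :=
  AddMonoidHom.toMultiplicative
    (ZMod.lift l ⟨(zmultiplesHom (ZMod n)) ((n / l : ℕ) : ZMod n), by
      simp only [zmultiplesHom_apply]
      rw [zsmul_eq_mul]
      push_cast
      rw [← Nat.cast_mul, Nat.mul_div_cancel' hl, ZMod.natCast_self]⟩)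

open scoped Classical in
/-- The induced character: for a (virtual) character `f` of `C_l ≤ C_n`, the induced
character of `C_n` vanishes off `C_l` and equals `[C_n : C_l] ⬝ f` on `C_l` (the
standard induced-character formula for an abelian group). -/
noncomputable def cycIndFun (n l : ℕ) (hl : l ∣ n) (f : Cyc l → ℂ) : Cyc n → ℂ :=
  fun g => ((n / l : ℕ) : ℂ) *
    (if g ∈ (cycIncl n l hl).range
      then f (Multiplicative.ofAdd (((Multiplicative.toAdd g).val / (n / l) : ℕ) : ZMod l))
      else 0)

/-- `I` is the homomorphism `R_ℂ C_l / D_{C_l} → R_ℂ C_n / D_{C_n}` induced by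
induction of characters along the inclusion `C_l → C_n`. -/
def IsIndQ (n l : ℕ) (hl : l ∣ n) (I : RTilde (Cyc l) →+ RTilde (Cyc n)) : Prop :=
  ∀ (r' : RCa (Cyc l)) (r : RCa (Cyc n)),
    (r : Cyc n → ℂ) = cycIndFun n l hl (r' : Cyc l → ℂ) →
      I (QuotientAddGroup.mk r') = QuotientAddGroup.mk r


/-! ### Auxiliary lemmas for the proof -/

section AuxProof

open Multiplicative

lemma bdatum_cons {G : Type*} [Group G] (a : G) (L : List G) :
    bdatum G (a :: L) = Finsupp.single (ConjClasses.mk a) 1 + bdatum G L := by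
  simp [bdatum]

lemma bdatum_append {G : Type*} [Group G] (L₁ L₂ : List G) :
    bdatum G (L₁ ++ L₂) = bdatum G L₁ + bdatum G L₂ := by
  simp [bdatum]

lemma bdatum_replicate {G : Type*} [Group G] (k : ℕ) (γ : G) :
    bdatum G (List.replicate k γ) = Finsupp.single (ConjClasses.mk γ) (k : ℤ) := by
  induction k with
  | zero => simp [bdatum]
  | succ k ih =>
      rw [List.replicate_succ, bdatum_cons, ih, ← Finsupp.single_add]
      congr 1
      push_cast
      ring

lemma exists_bdatum_sub {G : Type*} [Group G] (x : ConjClasses G →₀ ℤ) :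
    ∃ L₁ L₂ : List G, x = bdatum G L₁ - bdatum G L₂ := by
  induction x using Finsupp.induction with
  | zero => exact ⟨[], [], by simp [bdatum]⟩
  | single_add a b f haf hb ih =>
      obtain ⟨L₁, L₂, rfl⟩ := ih
      obtain ⟨γ, rfl⟩ := ConjClasses.mk_surjective a
      rcases le_or_gt 0 b with h | h
      · refine ⟨List.replicate b.toNat γ ++ L₁, L₂, ?_⟩
        rw [bdatum_append, bdatum_replicate, Int.toNat_of_nonneg h]
        abel
      · refine ⟨L₁, List.replicate (-b).toNat γ ++ L₂, ?_⟩
        rw [bdatum_append, bdatum_replicate]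
        have hb' : (((-b).toNat : ℤ)) = -b := Int.toNat_of_nonneg (by omega)
        rw [hb', Finsupp.single_neg]
        abel

lemma ccFinsuppMap_bdatum {H G : Type*} [Group H] [Group G] (f : H →* G) (L : List H) :
    ccFinsuppMap f (bdatum H L) = bdatum G (L.map f) := by
  induction L with
  | nil => simp [bdatum]
  | cons a L ih =>
      rw [bdatum_cons, map_add, ih, ccFinsuppMap_single, List.map_cons, bdatum_cons]

lemma BMap_bmk {H G : Type*} [Group H] [Group G] (f : H →* G) (L : List H)
    (h : bdatum H L ∈ lambdaKer H) (h' : bdatum G (L.map f) ∈ lambdaKer G) :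
    BMap f (bmk L h) = bmk (L.map f) h' := by
  unfold BMap bmk
  rw [QuotientAddGroup.map_mk]
  congr 1
  exact Subtype.ext (ccFinsuppMap_bdatum f L)

lemma prod_eq_one_of_mem_lambdaKer {G : Type*} [CommGroup G] {L : List G}
    (h : bdatum G L ∈ lambdaKer G) : L.prod = 1 := by
  have h1 : degMap G (bdatum G L) = 0 := h
  rw [degMap_bdatum] at h1
  have h2 : Abelianization.of (L.prod) = 1 := h1
  have h3 : (Abelianization.equivOfComm (H := G)) L.prod
      = Abelianization.equivOfComm (1 : G) := by
    rw [map_one]; exact h2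
  exact Abelianization.equivOfComm.injective h3

lemma exists_bmk_decomp {G : Type*} [CommGroup G] (α : BG G) :
    ∃ (L₁ L₂ : List G) (h₁ : bdatum G L₁ ∈ lambdaKer G) (h₂ : bdatum G L₂ ∈ lambdaKer G),
      α = bmk L₁ h₁ - bmk L₂ h₂ := by
  obtain ⟨x, rfl⟩ := QuotientAddGroup.mk_surjective α
  obtain ⟨L₁, L₂, hx⟩ := exists_bdatum_sub (G := G) (x : ConjClasses G →₀ ℤ)
  obtain ⟨a, ha⟩ := Abelianization.equivOfComm.surjective
    (Additive.toMul (- degMap G (bdatum G L₁)))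
  have ha' : Additive.ofMul (Abelianization.of a) = - degMap G (bdatum G L₁) := by
    have h0 : Abelianization.of a = Additive.toMul (- degMap G (bdatum G L₁)) := ha
    rw [h0]
    rfl
  have hdeg : degMap G (bdatum G L₂) = degMap G (bdatum G L₁) := by
    have h0 : degMap G ((x : ConjClasses G →₀ ℤ)) = 0 := x.2
    rw [hx, map_sub] at h0
    exact (sub_eq_zero.mp h0).symm
  have h₁ : bdatum G (a :: L₁) ∈ lambdaKer G := by
    show degMap G _ = 0
    rw [bdatum_cons, map_add, degMap_single, one_smul, ha']
    abel
  have h₂ : bdatum G (a :: L₂) ∈ lambdaKer G := by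
    show degMap G _ = 0
    rw [bdatum_cons, map_add, degMap_single, one_smul, ha', hdeg]
    abel
  refine ⟨a :: L₁, a :: L₂, h₁, h₂, ?_⟩
  have hxeq : x = (⟨bdatum G (a :: L₁), h₁⟩ : lambdaKer G) - ⟨bdatum G (a :: L₂), h₂⟩ := by
    apply Subtype.ext
    show (x : ConjClasses G →₀ ℤ) = bdatum G (a :: L₁) - bdatum G (a :: L₂)
    rw [bdatum_cons, bdatum_cons, hx]
    abel
  rw [hxeq, QuotientAddGroup.mk_sub]
  rfl

/-! ### Number-theoretic lemmas about `rVal` -/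

lemma rVal_modEq (n a j : ℕ) :
    n.gcd a * rVal n a j ≡ j * a [MOD n] := by
  have hga : n.gcd a ∣ a := Nat.gcd_dvd_right n a
  have hgn : n.gcd a ∣ n := Nat.gcd_dvd_left n a
  have h1 : rVal n a j ≡ j * (a / n.gcd a) [MOD n / n.gcd a] := by
    unfold rVal
    split_ifs with h
    · show _ % _ = _ % _
      rw [h, Nat.mod_self]
    · exact Nat.mod_modEq _ _
  have h2 := Nat.ModEq.mul_left' (c := n.gcd a) h1
  rw [Nat.mul_div_cancel' hgn] at h2
  calc n.gcd a * rVal n a j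
      ≡ n.gcd a * (j * (a / n.gcd a)) [MOD n] := h2
    _ = j * a := by rw [mul_left_comm, Nat.mul_div_cancel' hga]

lemma rVal_add_mul (l a j t : ℕ) : rVal l a (j + l * t) = rVal l a j := by
  have hgl : l.gcd a ∣ l := Nat.gcd_dvd_left l a
  have hl : l / l.gcd a * l.gcd a = l := Nat.div_mul_cancel hgl
  have key : (j + l * t) * (a / l.gcd a) % (l / l.gcd a)
      = j * (a / l.gcd a) % (l / l.gcd a) := by
    have hsplit : (j + l * t) * (a / l.gcd a)
        = j * (a / l.gcd a) + (l / l.gcd a) * (l.gcd a * t * (a / l.gcd a)) := by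
      have e : (l / l.gcd a) * (l.gcd a * t * (a / l.gcd a))
          = (l / l.gcd a * l.gcd a) * (t * (a / l.gcd a)) := by ring
      rw [e, hl]
      ring
    rw [hsplit, Nat.add_mul_mod_self_left]
  unfold rVal
  rw [key]

lemma rVal_of_dvd (l : ℕ) (a : ℕ) {j : ℕ} (h : l ∣ j) : rVal l a j = l / l.gcd a := by
  have hgl : l.gcd a ∣ l := Nat.gcd_dvd_left l a
  have hdvd : (l / l.gcd a) ∣ j * (a / l.gcd a) :=
    dvd_mul_of_dvd_left (dvd_trans ⟨l.gcd a, (Nat.div_mul_cancel hgl).symm⟩ h) _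
  obtain ⟨c, hc⟩ := hdvd
  unfold rVal
  rw [hc, Nat.mul_mod_right]
  simp

lemma sum_gcd_rVal_modEq (n j : ℕ) (L : List (Cyc n)) :
    (L.map fun γ => n.gcd (Multiplicative.toAdd γ).val
        * rVal n (Multiplicative.toAdd γ).val j).sum
      ≡ j * (L.map fun γ => (Multiplicative.toAdd γ).val).sum [MOD n] := by
  induction L with
  | nil => rfl
  | cons a L ih =>
      simp only [List.map_cons, List.sum_cons, Nat.mul_add]
      exact (rVal_modEq n _ j).add ih

lemma dvd_sum_val (n : ℕ) [NeZero n] {L : List (Cyc n)} (h : L.prod = 1) :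
    n ∣ (L.map fun γ => (Multiplicative.toAdd γ).val).sum := by
  have key : ∀ M : List (Cyc n),
      (((M.map fun γ => (Multiplicative.toAdd γ).val).sum : ℕ) : ZMod n)
        = Multiplicative.toAdd M.prod := by
    intro M
    induction M with
    | nil => simp
    | cons a M ih =>
        simp only [List.map_cons, List.sum_cons, Nat.cast_add, List.prod_cons, toAdd_mul, ih,
          ZMod.natCast_rightInverse (Multiplicative.toAdd a)]
  have h0 := key L
  rw [h, toAdd_one] at h0
  exact (ZMod.natCast_eq_zero_iff _ n).mp h0

lemma dvd_sum_gcd_rVal (n : ℕ) [NeZero n] {L : List (Cyc n)} (h : L.prod = 1) (j : ℕ) :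
    n ∣ (L.map fun γ => n.gcd (Multiplicative.toAdd γ).val
        * rVal n (Multiplicative.toAdd γ).val j).sum := by
  have h1 := sum_gcd_rVal_modEq n j L
  have h2 : n ∣ j * (L.map fun γ => (Multiplicative.toAdd γ).val).sum :=
    Dvd.dvd.mul_left (dvd_sum_val n h) j
  exact Nat.modEq_zero_iff_dvd.mp (h1.trans (Nat.modEq_zero_iff_dvd.mpr h2))

/-! ### `rho` as a character, membership in `RCa` -/

noncomputable def rhoChar (n j : ℕ) [NeZero n] : Cyc n →* ℂˣ where
  toFun g := (Units.mk0 (Complex.exp (2 * (Real.pi : ℂ) * Complex.I * j / n))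
      (Complex.exp_ne_zero _)) ^ (Multiplicative.toAdd g).val
  map_one' := by simp
  map_mul' a b := by
    have hn : (n : ℂ) ≠ 0 := Nat.cast_ne_zero.mpr (NeZero.ne n)
    have hu : (Units.mk0 (Complex.exp (2 * (Real.pi : ℂ) * Complex.I * j / n))
        (Complex.exp_ne_zero _)) ^ n = 1 := by
      apply Units.ext
      rw [Units.val_pow_eq_pow_val, Units.val_one, Units.val_mk0, ← Complex.exp_nat_mul,
        Complex.exp_eq_one_iff]
      exact ⟨j, by field_simp [hn]; norm_cast⟩
    show _ ^ (Multiplicative.toAdd (a * b)).val = _ ^ _ * _ ^ _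
    rw [toAdd_mul, ZMod.val_add, ← pow_eq_pow_mod _ hu, pow_add]

lemma rho_apply_char (n j : ℕ) [NeZero n] (g : Cyc n) :
    rho n j g = ((rhoChar n j g : ℂˣ) : ℂ) := by
  have hn : (n : ℂ) ≠ 0 := Nat.cast_ne_zero.mpr (NeZero.ne n)
  show Complex.exp _ = _
  simp only [rhoChar, MonoidHom.coe_mk, OneHom.coe_mk, Units.val_pow_eq_pow_val, Units.val_mk0]
  rw [← Complex.exp_nat_mul]
  congr 1
  field_simp [hn]

lemma rho_mem_RCa (n j : ℕ) [NeZero n] : rho n j ∈ RCa (Cyc n) :=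
  AddSubgroup.subset_closure ⟨rhoChar n j, funext fun g => rho_apply_char n j g⟩

lemma thetaFun_mem_RCa (n : ℕ) [NeZero n] {L : List (Cyc n)} (h : L.prod = 1) :
    thetaFun n L ∈ RCa (Cyc n) := by
  have hn : (n : ℂ) ≠ 0 := Nat.cast_ne_zero.mpr (NeZero.ne n)
  unfold thetaFun
  refine AddSubgroup.sum_mem _ fun j _ => ?_
  obtain ⟨d, hd⟩ := dvd_sum_gcd_rVal n h j
  have hsum : (L.map fun γ => ((n.gcd (Multiplicative.toAdd γ).val
      * rVal n (Multiplicative.toAdd γ).val j : ℕ) : ℂ)).sum = ((n : ℂ) * d) := by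
    rw [← Nat.cast_mul, ← hd, Nat.cast_list_sum, List.map_map]
    simp [Function.comp_def]
  rw [hsum]
  have hc : (L.length : ℂ) - (n : ℂ) * d / n = (((L.length : ℤ) - d : ℤ) : ℂ) := by
    push_cast
    rw [mul_div_cancel_left₀ _ hn]
  rw [hc, Int.cast_smul_eq_zsmul]
  exact zsmul_mem (rho_mem_RCa n j) _

/-! ### The inclusion `C_l → C_n` -/

lemma cycIncl_val (n l : ℕ) [NeZero n] [NeZero l] (hl : l ∣ n) (γ : Cyc l) :
    (Multiplicative.toAdd (cycIncl n l hl γ)).val = n / l * (Multiplicative.toAdd γ).val := by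
  have hm : 0 < n / l := Nat.div_pos (Nat.le_of_dvd (Nat.pos_of_ne_zero (NeZero.ne n)) hl)
    (Nat.pos_of_ne_zero (NeZero.ne l))
  have hn : n / l * l = n := Nat.div_mul_cancel hl
  have h1 : Multiplicative.toAdd (cycIncl n l hl γ)
      = (((Multiplicative.toAdd γ).val * (n / l) : ℕ) : ZMod n) := by
    simp only [cycIncl, AddMonoidHom.toMultiplicative_apply_apply, toAdd_ofAdd]
    conv_lhs => rw [show Multiplicative.toAdd γ
      = ((((Multiplicative.toAdd γ).val : ℕ) : ℤ) : ZMod l) by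
        push_cast
        rw [ZMod.natCast_rightInverse (Multiplicative.toAdd γ)]]
    rw [ZMod.lift_coe]
    show ((Multiplicative.toAdd γ).val : ℤ) • (((n / l : ℕ) : ZMod n)) = _
    rw [zsmul_eq_mul]
    push_cast
    ring
  rw [h1, ZMod.val_natCast, Nat.mod_eq_of_lt, mul_comm]
  calc (Multiplicative.toAdd γ).val * (n / l) < l * (n / l) :=
        (Nat.mul_lt_mul_right hm).mpr (ZMod.val_lt _)
    _ = n := by rw [mul_comm]; exact hn

lemma mem_cycIncl_range_iff (n l : ℕ) [NeZero n] [NeZero l] (hl : l ∣ n) (g : Cyc n) :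
    g ∈ (cycIncl n l hl).range ↔ n / l ∣ (Multiplicative.toAdd g).val := by
  have hm : 0 < n / l := Nat.div_pos (Nat.le_of_dvd (Nat.pos_of_ne_zero (NeZero.ne n)) hl)
    (Nat.pos_of_ne_zero (NeZero.ne l))
  have hn : n / l * l = n := Nat.div_mul_cancel hl
  constructor
  · rintro ⟨γ, rfl⟩
    exact ⟨_, cycIncl_val n l hl γ⟩
  · rintro ⟨u, hu⟩
    have hvl := ZMod.val_lt (Multiplicative.toAdd g)
    have hul : u < l := by
      by_contra hcon
      push_neg at hcon
      have h2 : n / l * l ≤ n / l * u := Nat.mul_le_mul_left _ hcon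
      omega
    refine ⟨Multiplicative.ofAdd ((u : ℕ) : ZMod l), ?_⟩
    have h1 := cycIncl_val n l hl (Multiplicative.ofAdd ((u : ℕ) : ZMod l))
    rw [toAdd_ofAdd, ZMod.val_natCast, Nat.mod_eq_of_lt hul] at h1
    have h2 : (Multiplicative.toAdd (cycIncl n l hl (Multiplicative.ofAdd ((u : ℕ) : ZMod l)))).val
        = (Multiplicative.toAdd g).val := by rw [h1, ← hu]
    have e1 := ZMod.natCast_rightInverse
      (Multiplicative.toAdd (cycIncl n l hl (Multiplicative.ofAdd ((u : ℕ) : ZMod l))))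
    have e2 := ZMod.natCast_rightInverse (Multiplicative.toAdd g)
    have h3 : Multiplicative.toAdd (cycIncl n l hl (Multiplicative.ofAdd ((u : ℕ) : ZMod l)))
        = Multiplicative.toAdd g := by
      rw [← e1, ← e2, h2]
    exact Multiplicative.toAdd.injective h3

lemma gcd_rVal_mul (m l a j : ℕ) (hm : 0 < m) :
    (m * l).gcd (m * a) * rVal (m * l) (m * a) j = m * (l.gcd a * rVal l a j) := by
  have hgcd : (m * l).gcd (m * a) = m * l.gcd a := Nat.gcd_mul_left _ _ _
  have hrv : rVal (m * l) (m * a) j = rVal l a j := by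
    unfold rVal
    rw [hgcd, Nat.mul_div_mul_left _ _ hm, Nat.mul_div_mul_left _ _ hm]
  rw [hgcd, hrv, mul_assoc]

lemma gcd_rVal_incl (n l : ℕ) [NeZero n] [NeZero l] (hl : l ∣ n) (γ : Cyc l) (j : ℕ) :
    n.gcd (Multiplicative.toAdd (cycIncl n l hl γ)).val
        * rVal n (Multiplicative.toAdd (cycIncl n l hl γ)).val j
      = n / l * (l.gcd (Multiplicative.toAdd γ).val
        * rVal l (Multiplicative.toAdd γ).val j) := by
  have hlpos : 0 < l := Nat.pos_of_ne_zero (NeZero.ne l)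
  rw [cycIncl_val n l hl γ]
  obtain ⟨m, hm⟩ := hl
  have hmpos : 0 < m := by
    rcases Nat.eq_zero_or_pos m with h0 | h0
    · exfalso; exact NeZero.ne n (by rw [hm, h0, mul_zero])
    · exact h0
  subst hm
  have hdiv : l * m / l = m := Nat.mul_div_cancel_left m hlpos
  simp only [hdiv]
  rw [mul_comm l m]
  exact gcd_rVal_mul m l _ j hmpos

lemma sum_map_incl (n l : ℕ) [NeZero n] [NeZero l] (hl : l ∣ n) (L : List (Cyc l)) (j : ℕ) :
    ((L.map (cycIncl n l hl)).map fun γ => ((n.gcd (Multiplicative.toAdd γ).val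
        * rVal n (Multiplicative.toAdd γ).val j : ℕ) : ℂ)).sum
      = ((n / l : ℕ) : ℂ) * (L.map fun γ => ((l.gcd (Multiplicative.toAdd γ).val
        * rVal l (Multiplicative.toAdd γ).val j : ℕ) : ℂ)).sum := by
  induction L with
  | nil => simp
  | cons a L ih =>
      simp only [List.map_cons, List.sum_cons, mul_add, ih]
      congr 1
      rw [gcd_rVal_incl n l hl a j]
      push_cast
      ring

lemma sum_rVal_periodic (l : ℕ) (L : List (Cyc l)) (j t : ℕ) :
    (L.map fun γ => ((l.gcd (Multiplicative.toAdd γ).val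
        * rVal l (Multiplicative.toAdd γ).val (j + l * t) : ℕ) : ℂ)).sum
      = (L.map fun γ => ((l.gcd (Multiplicative.toAdd γ).val
        * rVal l (Multiplicative.toAdd γ).val j : ℕ) : ℂ)).sum := by
  simp only [rVal_add_mul]

lemma sum_rVal_vanish (l : ℕ) (L : List (Cyc l)) {j : ℕ} (h : l ∣ j) :
    (L.map fun γ => ((l.gcd (Multiplicative.toAdd γ).val
        * rVal l (Multiplicative.toAdd γ).val j : ℕ) : ℂ)).sum
      = (L.length : ℂ) * l := by
  induction L with
  | nil => simp
  | cons a L ih =>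
      simp only [List.map_cons, List.sum_cons, List.length_cons, ih]
      rw [rVal_of_dvd l _ h, Nat.mul_div_cancel' (Nat.gcd_dvd_left l _)]
      push_cast
      ring

/-! ### The induced character of `rho` -/

lemma cycIndFun_sum_smul (n l : ℕ) (hl : l ∣ n) {ι : Type*} (s : Finset ι)
    (c : ι → ℂ) (f : ι → Cyc l → ℂ) (g : Cyc n) :
    cycIndFun n l hl (∑ j ∈ s, c j • f j) g = ∑ j ∈ s, c j * cycIndFun n l hl (f j) g := by
  classical
  unfold cycIndFun
  split_ifs with h
  · rw [Finset.sum_apply, Finset.mul_sum]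
    refine Finset.sum_congr rfl fun j _ => ?_
    rw [Pi.smul_apply, smul_eq_mul]
    ring
  · simp

lemma cycIndFun_rho (n l : ℕ) [NeZero n] [NeZero l] (hl : l ∣ n) (j' : ℕ) (g : Cyc n) :
    cycIndFun n l hl (rho l j') g = ∑ t ∈ Finset.range (n / l), rho n (j' + l * t) g := by
  classical
  have hl0 : (l : ℂ) ≠ 0 := Nat.cast_ne_zero.mpr (NeZero.ne l)
  have hlpos : 0 < l := Nat.pos_of_ne_zero (NeZero.ne l)
  have hrange := mem_cycIncl_range_iff n l hl g
  obtain ⟨m, hm⟩ := hl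
  subst hm
  have hmpos : 0 < m :=
    Nat.pos_of_ne_zero (fun h0 => NeZero.ne (l * m) (by rw [h0, mul_zero]))
  have hm0 : (m : ℂ) ≠ 0 := Nat.cast_ne_zero.mpr hmpos.ne'
  have hdiv : l * m / l = m := Nat.mul_div_cancel_left m hlpos
  rw [hdiv] at hrange ⊢
  have hkey : ∀ t : ℕ, rho (l * m) (j' + l * t) g
      = Complex.exp (2 * (Real.pi : ℂ) * Complex.I * j'
          * (((Multiplicative.toAdd g).val : ℕ) : ℂ) / ((l : ℂ) * m))
        * Complex.exp (2 * (Real.pi : ℂ) * Complex.I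
          * (((Multiplicative.toAdd g).val : ℕ) : ℂ) / (m : ℂ)) ^ t := by
    intro t
    rw [← Complex.exp_nat_mul, ← Complex.exp_add]
    show Complex.exp _ = Complex.exp _
    congr 1
    push_cast
    field_simp [hl0, hm0]
  rw [Finset.sum_congr rfl fun t _ => hkey t, ← Finset.mul_sum]
  by_cases hdvd : m ∣ (Multiplicative.toAdd g).val
  · obtain ⟨u, hu⟩ := hdvd
    have hvl : (Multiplicative.toAdd g).val < l * m := ZMod.val_lt _
    have hul : u < l := by
      by_contra hcon
      push_neg at hcon
      have h2 : m * l ≤ m * u := Nat.mul_le_mul_left m hcon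
      have h3 : l * m = m * l := mul_comm l m
      linarith [hu, hvl]
    have hexp1 : Complex.exp (2 * (Real.pi : ℂ) * Complex.I
        * (((Multiplicative.toAdd g).val : ℕ) : ℂ) / (m : ℂ)) = 1 := by
      rw [Complex.exp_eq_one_iff]
      refine ⟨u, ?_⟩
      rw [hu]
      push_cast
      field_simp [hm0]
    rw [hexp1]
    simp only [one_pow, Finset.sum_const, Finset.card_range, nsmul_eq_mul, mul_one]
    unfold cycIndFun
    rw [hdiv]
    rw [if_pos (hrange.mpr ⟨u, hu⟩)]
    have hq : (Multiplicative.toAdd g).val / m = u := by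
      rw [hu]
      exact Nat.mul_div_cancel_left u hmpos
    rw [hq]
    unfold rho
    rw [toAdd_ofAdd, ZMod.val_natCast, Nat.mod_eq_of_lt hul]
    have harg : 2 * (Real.pi : ℂ) * Complex.I * j' * ((u : ℕ) : ℂ) / l
        = 2 * (Real.pi : ℂ) * Complex.I * j'
          * (((Multiplicative.toAdd g).val : ℕ) : ℂ) / ((l : ℂ) * m) := by
      rw [hu]
      push_cast
      field_simp [hl0, hm0]
    rw [harg]
    ring
  · have hne1 : Complex.exp (2 * (Real.pi : ℂ) * Complex.I
        * (((Multiplicative.toAdd g).val : ℕ) : ℂ) / (m : ℂ)) ≠ 1 := by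
      intro hone
      rw [Complex.exp_eq_one_iff] at hone
      obtain ⟨k, hk⟩ := hone
      have h2πI : (2 * (Real.pi : ℂ) * Complex.I) ≠ 0 := by
        simp [Real.pi_ne_zero, Complex.I_ne_zero]
      have h1 : 2 * (Real.pi : ℂ) * Complex.I * (((Multiplicative.toAdd g).val : ℕ) : ℂ)
          = 2 * (Real.pi : ℂ) * Complex.I * ((k : ℂ) * (m : ℂ)) := by
        have h0 := congrArg (fun z : ℂ => z * (m : ℂ)) hk
        simp only [div_mul_cancel₀ _ hm0] at h0
        linear_combination h0
      have h2 := mul_left_cancel₀ h2πI h1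
      have h3 : ((((Multiplicative.toAdd g).val : ℕ) : ℤ) : ℂ)
          = (((k * (m : ℤ)) : ℤ) : ℂ) := by
        push_cast
        linear_combination h2
      have h4 : (((Multiplicative.toAdd g).val : ℕ) : ℤ) = k * (m : ℤ) :=
        Int.cast_injective h3
      exact hdvd (Int.natCast_dvd_natCast.mp ⟨k, by rw [h4]; ring⟩)
    have hpow : Complex.exp (2 * (Real.pi : ℂ) * Complex.I
        * (((Multiplicative.toAdd g).val : ℕ) : ℂ) / (m : ℂ)) ^ m = 1 := by
      rw [← Complex.exp_nat_mul, Complex.exp_eq_one_iff]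
      refine ⟨(Multiplicative.toAdd g).val, ?_⟩
      field_simp [hm0]
      norm_cast
    rw [geom_sum_eq hne1, hpow]
    unfold cycIndFun
    rw [if_neg (fun hmem => hdvd (hrange.mp hmem))]
    simp

/-! ### The main function identity -/

lemma thetaFun_map_eq (n l : ℕ) [NeZero n] [NeZero l] (hl : l ∣ n) (L : List (Cyc l)) :
    thetaFun n (L.map (cycIncl n l hl)) = cycIndFun n l hl (thetaFun l L) := by
  classical
  have hl0 : (l : ℂ) ≠ 0 := Nat.cast_ne_zero.mpr (NeZero.ne l)
  have hlpos : 0 < l := Nat.pos_of_ne_zero (NeZero.ne l)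
  have hmnat : 0 < n / l := Nat.div_pos (Nat.le_of_dvd (Nat.pos_of_ne_zero (NeZero.ne n)) hl)
    (Nat.pos_of_ne_zero (NeZero.ne l))
  have hm0 : ((n / l : ℕ) : ℂ) ≠ 0 := Nat.cast_ne_zero.mpr hmnat.ne'
  have hn : n / l * l = n := Nat.div_mul_cancel hl
  have hnN : (l * (n / l) : ℕ) = n := by rw [mul_comm]; exact hn
  have hnC : (n : ℂ) = (l : ℂ) * ((n / l : ℕ) : ℂ) := by exact_mod_cast hnN.symm
  funext g
  have hLHS : thetaFun n (L.map (cycIncl n l hl)) g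
      = ∑ j ∈ Finset.Ico 1 n,
          ((L.length : ℂ) - (L.map fun γ => ((l.gcd (Multiplicative.toAdd γ).val
            * rVal l (Multiplicative.toAdd γ).val j : ℕ) : ℂ)).sum / l) * rho n j g := by
    unfold thetaFun
    rw [Finset.sum_apply]
    refine Finset.sum_congr rfl fun j hj => ?_
    rw [Pi.smul_apply, smul_eq_mul]
    congr 1
    rw [List.length_map, sum_map_incl n l hl L j, hnC, mul_comm (l : ℂ),
      mul_div_mul_left _ _ hm0]
  have hRHS : cycIndFun n l hl (thetaFun l L) g
      = ∑ j' ∈ Finset.Ico 1 l, ∑ t ∈ Finset.range (n / l),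
          ((L.length : ℂ) - (L.map fun γ => ((l.gcd (Multiplicative.toAdd γ).val
            * rVal l (Multiplicative.toAdd γ).val j' : ℕ) : ℂ)).sum / l)
            * rho n (j' + l * t) g := by
    show cycIndFun n l hl (∑ j ∈ Finset.Ico 1 l, _ • rho l j) g = _
    rw [cycIndFun_sum_smul]
    refine Finset.sum_congr rfl fun j' hj' => ?_
    rw [cycIndFun_rho n l hl j' g, Finset.mul_sum]
  rw [hLHS, hRHS, ← Finset.sum_product']
  have hvan : ∀ j ∈ Finset.Ico 1 n,
      ((L.length : ℂ) - (L.map fun γ => ((l.gcd (Multiplicative.toAdd γ).val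
        * rVal l (Multiplicative.toAdd γ).val j : ℕ) : ℂ)).sum / l) * rho n j g ≠ 0
        → ¬ l ∣ j := by
    intro j hj hne hdvd
    apply hne
    rw [sum_rVal_vanish l L hdvd, mul_div_cancel_right₀ _ hl0, sub_self, zero_mul]
  rw [← Finset.sum_filter_of_ne hvan]
  refine Finset.sum_nbij' (fun j => (j % l, j / l)) (fun p => p.1 + l * p.2) ?_ ?_ ?_ ?_ ?_
  · intro j hj
    simp only [Finset.mem_filter, Finset.mem_Ico] at hj
    obtain ⟨⟨hj1, hj2⟩, hj3⟩ := hj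
    simp only [Finset.mem_product, Finset.mem_Ico, Finset.mem_range]
    refine ⟨⟨?_, Nat.mod_lt _ hlpos⟩, ?_⟩
    · rcases Nat.eq_zero_or_pos (j % l) with h0 | h0
      · exact absurd ((Nat.dvd_iff_mod_eq_zero.mpr h0)) hj3
      · exact h0
    · rw [Nat.div_lt_iff_lt_mul hlpos]
      calc j < n := hj2
        _ = n / l * l := hn.symm
  · intro p hp
    simp only [Finset.mem_product, Finset.mem_Ico, Finset.mem_range] at hp
    obtain ⟨⟨hp1, hp2⟩, hp3⟩ := hp
    simp only [Finset.mem_filter, Finset.mem_Ico]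
    refine ⟨⟨by omega, ?_⟩, ?_⟩
    · calc p.1 + l * p.2 < l + l * p.2 := by omega
        _ = l * (p.2 + 1) := by ring
        _ ≤ l * (n / l) := Nat.mul_le_mul_left _ (by omega)
        _ = n := hnN
    · intro hdvd
      have h1 : l ∣ p.1 := (Nat.dvd_add_right (Dvd.intro _ rfl)).mp (by rwa [add_comm] at hdvd)
      have := Nat.le_of_dvd (by omega) h1
      omega
  · intro j hj
    simp only [Finset.mem_filter, Finset.mem_Ico] at hj
    exact Nat.mod_add_div j l
  · intro p hp
    simp only [Finset.mem_product, Finset.mem_Ico, Finset.mem_range] at hp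
    obtain ⟨⟨hp1, hp2⟩, hp3⟩ := hp
    have h1 : (p.1 + l * p.2) % l = p.1 := by
      rw [Nat.add_mul_mod_self_left, Nat.mod_eq_of_lt hp2]
    have h2 : (p.1 + l * p.2) / l = p.2 := by
      rw [Nat.add_mul_div_left _ _ hlpos, Nat.div_eq_of_lt hp2, zero_add]
    exact Prod.ext h1 h2
  · intro j hj
    simp only [Finset.mem_filter, Finset.mem_Ico] at hj
    have hjeq : j % l + l * (j / l) = j := Nat.mod_add_div j l
    conv_lhs => rw [← hjeq]
    rw [sum_rVal_periodic]

end AuxProof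

/-- For the inclusion `i : C_l → C_n` (`l ∣ n`), the square formed by
`θ` and induction commutes: `θ ∘ 𝔹_i = Ind^{C_n}_{C_l} ∘ θ`. -/
theorem theta_commutes_with_induction (n l : ℕ) [NeZero n] [NeZero l] (hl : l ∣ n)
    (θn : BG (Cyc n) →+ RTilde (Cyc n)) (hθn : IsTheta θn)
    (θl : BG (Cyc l) →+ RTilde (Cyc l)) (hθl : IsTheta θl)
    (I : RTilde (Cyc l) →+ RTilde (Cyc n)) (hI : IsIndQ n l hl I) :
    ∀ α : BG (Cyc l), θn (BMap (cycIncl n l hl) α) = I (θl α) := by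
  have key : ∀ (L : List (Cyc l)) (h : bdatum (Cyc l) L ∈ lambdaKer (Cyc l)),
      θn (BMap (cycIncl n l hl) (bmk L h)) = I (θl (bmk L h)) := by
    intro L h
    have hprod : L.prod = 1 := prod_eq_one_of_mem_lambdaKer h
    have h' : bdatum (Cyc n) (L.map (cycIncl n l hl)) ∈ lambdaKer (Cyc n) := by
      rw [← ccFinsuppMap_bdatum]
      exact ccFinsuppMap_mem_lambdaKer _ h
    have hprod' : (L.map (cycIncl n l hl)).prod = 1 := by
      rw [← map_list_prod, hprod, map_one]
    rw [BMap_bmk _ _ h h',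
      hθn _ h' ⟨thetaFun n (L.map (cycIncl n l hl)), thetaFun_mem_RCa n hprod'⟩ rfl,
      hθl L h ⟨thetaFun l L, thetaFun_mem_RCa l hprod⟩ rfl,
      hI ⟨thetaFun l L, thetaFun_mem_RCa l hprod⟩
        ⟨thetaFun n (L.map (cycIncl n l hl)), thetaFun_mem_RCa n hprod'⟩
        (thetaFun_map_eq n l hl L)]
  intro α
  obtain ⟨L₁, L₂, h₁, h₂, rfl⟩ := exists_bmk_decomp α
  rw [map_sub, map_sub, map_sub, map_sub, key L₁ h₁, key L₂ h₂]
end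

section
/- Let $C_n=\langle x\rangle$ be cyclic of order $n$. For every $\alpha\in\mathbb{B}_{C_n}$ one has $\theta(-\alpha)=\overline{\theta(\alpha)}$; consequently $\theta(\alpha)+\overline{\theta(\alpha)}=0$, i.e. the image of $\theta$ is contained in $\mathbb{A}_{C_n}=\{a\in\widetilde{R_{\mathbb{C}}C_n} : a+\bar a=0\}$. -/
open Finsupp

/-! ### Auxiliary lemmas -/

section AuxGroup

variable {G : Type*} [Group G]

lemma aux_pair_mem_bRel (γ : G) :
    Finsupp.single (ConjClasses.mk γ) 1 + Finsupp.single (ConjClasses.mk γ⁻¹) 1 ∈ bRel G :=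
  AddSubgroup.subset_closure (Set.mem_insert_iff.mpr (Or.inr ⟨γ, rfl⟩))

lemma aux_bRel_le_lambdaKer : bRel G ≤ lambdaKer G := by
  rw [bRel, AddSubgroup.closure_le]
  rintro f hf
  rcases Set.mem_insert_iff.mp hf with rfl | ⟨γ, rfl⟩
  · simp [lambdaKer, AddMonoidHom.mem_ker, degMap_single]
  · simp only [SetLike.mem_coe, lambdaKer, AddMonoidHom.mem_ker, map_add, degMap_single,
      one_smul]
    rw [← ofMul_mul, ← map_mul]
    simp

lemma aux_bdatum_nil : bdatum G ([] : List G) = 0 := by simp [bdatum]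

lemma aux_bdatum_cons (a : G) (t : List G) :
    bdatum G (a :: t) = Finsupp.single (ConjClasses.mk a) 1 + bdatum G t := by
  simp [bdatum]

lemma aux_bdatum_append (L₁ L₂ : List G) :
    bdatum G (L₁ ++ L₂) = bdatum G L₁ + bdatum G L₂ := by
  simp [bdatum]

lemma aux_bdatum_replicate (m : ℕ) (γ : G) :
    bdatum G (List.replicate m γ) = Finsupp.single (ConjClasses.mk γ) (m : ℤ) := by
  induction m with
  | zero => simp [aux_bdatum_nil]
  | succ m ih =>
      rw [List.replicate_succ, aux_bdatum_cons, ih, ← Finsupp.single_add]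
      congr 1
      push_cast
      ring

lemma aux_exists_list (f : ConjClasses G →₀ ℤ) : ∃ L : List G, f - bdatum G L ∈ bRel G := by
  induction f using Finsupp.induction with
  | zero => exact ⟨[], by simp [aux_bdatum_nil]⟩
  | single_add c k f hc hk ih =>
      obtain ⟨L', hL'⟩ := ih
      obtain ⟨γ, rfl⟩ := ConjClasses.mk_surjective c
      rcases le_or_gt 0 k with hk0 | hk0
      · refine ⟨List.replicate k.toNat γ ++ L', ?_⟩
        rw [aux_bdatum_append, aux_bdatum_replicate, Int.toNat_of_nonneg hk0]
        have h : Finsupp.single (ConjClasses.mk γ) k + f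
            - (Finsupp.single (ConjClasses.mk γ) k + bdatum G L') = f - bdatum G L' := by
          abel
        rw [h]; exact hL'
      · refine ⟨List.replicate (-k).toNat γ⁻¹ ++ L', ?_⟩
        rw [aux_bdatum_append, aux_bdatum_replicate,
          Int.toNat_of_nonneg (by omega : (0:ℤ) ≤ -k)]
        have h : Finsupp.single (ConjClasses.mk γ) k + f
            - (Finsupp.single (ConjClasses.mk γ⁻¹) (-k) + bdatum G L')
            = k • (Finsupp.single (ConjClasses.mk γ) 1
                + Finsupp.single (ConjClasses.mk γ⁻¹) 1) + (f - bdatum G L') := by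
          rw [smul_add, Finsupp.smul_single, Finsupp.smul_single, Finsupp.single_neg]
          simp only [smul_eq_mul, mul_one]
          abel
        rw [h]
        exact add_mem (AddSubgroup.zsmul_mem _ (aux_pair_mem_bRel γ) k) hL'

lemma aux_bdatum_add_map_inv_mem (L : List G) :
    bdatum G L + bdatum G (L.map (fun γ => γ⁻¹)) ∈ bRel G := by
  induction L with
  | nil => simp [aux_bdatum_nil]
  | cons a t ih =>
      rw [List.map_cons, aux_bdatum_cons, aux_bdatum_cons]
      have h : Finsupp.single (ConjClasses.mk a) 1 + bdatum G t
          + (Finsupp.single (ConjClasses.mk a⁻¹) 1 + bdatum G (t.map (fun γ => γ⁻¹)))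
          = (Finsupp.single (ConjClasses.mk a) 1 + Finsupp.single (ConjClasses.mk a⁻¹) 1)
            + (bdatum G t + bdatum G (t.map (fun γ => γ⁻¹))) := by abel
      rw [h]
      exact add_mem (aux_pair_mem_bRel a) ih

lemma aux_exists_bmk (α : BG G) :
    ∃ (L : List G) (hL : bdatum G L ∈ lambdaKer G), α = bmk L hL := by
  induction α using QuotientAddGroup.induction_on with
  | H x =>
    obtain ⟨f, hf⟩ := x
    obtain ⟨L, hrel⟩ := aux_exists_list f
    have hbd : bdatum G L ∈ lambdaKer G := by
      have := sub_mem hf (aux_bRel_le_lambdaKer hrel)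
      simpa using this
    refine ⟨L, hbd, ?_⟩
    rw [bmk, QuotientAddGroup.eq]
    rw [AddSubgroup.mem_addSubgroupOf]
    have h : ((-(⟨f, hf⟩ : lambdaKer G) + ⟨bdatum G L, hbd⟩ : lambdaKer G) : ConjClasses G →₀ ℤ)
        = -(f - bdatum G L) := by
      simp [sub_eq_add_neg]; abel
    rw [h]
    exact neg_mem hrel

lemma aux_bmk_neg (L : List G) (hL : bdatum G L ∈ lambdaKer G)
    (hL' : bdatum G (L.map (fun γ => γ⁻¹)) ∈ lambdaKer G) :
    -(bmk L hL) = bmk (L.map (fun γ => γ⁻¹)) hL' := by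
  rw [neg_eq_iff_add_eq_zero]
  show QuotientAddGroup.mk _ + QuotientAddGroup.mk _ = 0
  rw [← QuotientAddGroup.mk_add, QuotientAddGroup.eq_zero_iff]
  rw [AddSubgroup.mem_addSubgroupOf]
  exact aux_bdatum_add_map_inv_mem L

end AuxGroup

section AuxComm

variable {G : Type*} [CommGroup G]

lemma aux_prod_map_inv (L : List G) : (L.map (fun γ => γ⁻¹)).prod = L.prod⁻¹ := by
  induction L with
  | nil => simp
  | cons a t ih => rw [List.map_cons, List.prod_cons, List.prod_cons, ih, mul_inv, mul_comm]

lemma aux_prod_eq_one_of_mem_lambdaKer {L : List G} (hL : bdatum G L ∈ lambdaKer G) :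
    L.prod = 1 := by
  have h1 : degMap G (bdatum G L) = 0 := hL
  rw [degMap_bdatum] at h1
  have h2 : Abelianization.of L.prod = 1 := h1
  have := Abelianization.equivOfComm.injective (a₁ := L.prod) (a₂ := 1)
  apply this
  simpa [Abelianization.equivOfComm] using h2

end AuxComm

/-! ### Arithmetic lemmas about `rVal` -/

/-- The summand `k_s r_{sj}`. -/
def termN (n i j : ℕ) : ℕ := n.gcd i * rVal n i j

lemma aux_rVal_modEq (n i j : ℕ) :
    rVal n i j ≡ j * (i / n.gcd i) [MOD n / n.gcd i] := by
  unfold rVal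
  split_ifs with h
  · show (n / n.gcd i) % _ = _
    rw [Nat.mod_self, h]
  · exact Nat.mod_modEq _ _

lemma aux_termN_modEq (n i j : ℕ) : termN n i j ≡ j * i [MOD n.gcd i * (n / n.gcd i)] := by
  have h := (aux_rVal_modEq n i j).mul_left' (n.gcd i)
  have e : n.gcd i * (j * (i / n.gcd i)) = j * i := by
    rw [mul_left_comm, Nat.mul_div_cancel' (Nat.gcd_dvd_right n i)]
  rwa [e] at h

lemma aux_termN_modEq' (n i j : ℕ) (hn : n ≠ 0) : termN n i j ≡ j * i [MOD n] := by
  have h := aux_termN_modEq n i j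
  rwa [Nat.mul_div_cancel' (Nat.gcd_dvd_left n i)] at h

lemma aux_rVal_symm (n i j : ℕ) [NeZero n] (hi0 : 0 < i) (hi : i < n)
    (hj1 : 1 ≤ j) (hj : j < n) :
    rVal n (n - i) j = rVal n i (n - j) := by
  have hkn : n.gcd i ∣ n := Nat.gcd_dvd_left n i
  have hki : n.gcd i ∣ i := Nat.gcd_dvd_right n i
  have hk0 : 0 < n.gcd i := Nat.gcd_pos_of_pos_left _ (Nat.pos_of_ne_zero (NeZero.ne n))
  have ekM : n.gcd i * (n / n.gcd i) = n := Nat.mul_div_cancel' hkn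
  have ekl : n.gcd i * (i / n.gcd i) = i := Nat.mul_div_cancel' hki
  have hg : n.gcd (n - i) = n.gcd i := by
    rw [Nat.gcd_comm n (n - i)]
    rw [show Nat.gcd (n - i) n = Nat.gcd (n - i) i by
      have h1 := Nat.gcd_sub_self_right (m := n - i) (n := n) (by omega)
      rw [show n - (n - i) = i by omega] at h1
      exact h1.symm]
    exact Nat.gcd_sub_self_left (le_of_lt hi)
  have hlM : i / n.gcd i ≤ n / n.gcd i := Nat.div_le_div_right (le_of_lt hi)
  have e3 : (n - i) / n.gcd i = n / n.gcd i - i / n.gcd i := by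
    rw [show n - i = n.gcd i * (n / n.gcd i - i / n.gcd i) by
      rw [Nat.mul_sub, ekM, ekl]]
    rw [Nat.mul_div_cancel_left _ hk0]
  have hMdvd : n / n.gcd i ∣ n := Nat.div_dvd_of_dvd hkn
  have hmod : j * (n / n.gcd i - i / n.gcd i) ≡ (n - j) * (i / n.gcd i)
      [MOD n / n.gcd i] := by
    have h0a : j * (n / n.gcd i - i / n.gcd i) + j * (i / n.gcd i) = j * (n / n.gcd i) := by
      rw [← Nat.mul_add, Nat.sub_add_cancel hlM]
    have h0b : (n - j) * (i / n.gcd i) + j * (i / n.gcd i) = n * (i / n.gcd i) := by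
      rw [← Nat.add_mul, Nat.sub_add_cancel (le_of_lt hj)]
    have hA : j * (n / n.gcd i) ≡ 0 [MOD n / n.gcd i] :=
      Nat.modEq_zero_iff_dvd.mpr (dvd_mul_left _ j)
    have hB : n * (i / n.gcd i) ≡ 0 [MOD n / n.gcd i] :=
      Nat.modEq_zero_iff_dvd.mpr (hMdvd.mul_right _)
    have h := hA.trans hB.symm
    rw [← h0a, ← h0b] at h
    exact Nat.ModEq.add_right_cancel' _ h
  unfold rVal
  rw [hg, e3]
  rw [show j * (n / n.gcd i - i / n.gcd i) % (n / n.gcd i)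
      = (n - j) * (i / n.gcd i) % (n / n.gcd i) from hmod]

lemma aux_termN_symm (n : ℕ) [NeZero n] (i j : ℕ) (hi : i < n) (hj1 : 1 ≤ j) (hj : j < n) :
    termN n ((n - i) % n) j = termN n i (n - j) := by
  rcases Nat.eq_zero_or_pos i with rfl | hipos
  · simp [termN, rVal, Nat.mod_self]
  · have hii : (n - i) % n = n - i := Nat.mod_eq_of_lt (by omega)
    have hg : n.gcd (n - i) = n.gcd i := by
      rw [Nat.gcd_comm n (n - i)]
      rw [show Nat.gcd (n - i) n = Nat.gcd (n - i) i by
        have h1 := Nat.gcd_sub_self_right (m := n - i) (n := n) (by omega)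
        rw [show n - (n - i) = i by omega] at h1
        exact h1.symm]
      exact Nat.gcd_sub_self_left (le_of_lt hi)
    rw [hii]
    unfold termN
    rw [hg, aux_rVal_symm n i j hipos hi hj1 hj]

/-! ### Characters of the cyclic group -/

lemma aux_exp_twopi_int (m : ℤ) : Complex.exp (2 * (Real.pi : ℂ) * Complex.I * m) = 1 := by
  rw [show 2 * (Real.pi : ℂ) * Complex.I * m = m * (2 * Real.pi * Complex.I) by ring]
  exact Complex.exp_int_mul_two_pi_mul_I m

lemma aux_exp_twopi_nat (m : ℕ) : Complex.exp (2 * (Real.pi : ℂ) * Complex.I * m) = 1 := by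
  simpa using aux_exp_twopi_int (m : ℤ)

lemma aux_exp_div_mod (n : ℕ) [NeZero n] (j v : ℕ) :
    Complex.exp (2 * (Real.pi : ℂ) * Complex.I * j * ((v % n : ℕ) : ℂ) / n)
      = Complex.exp (2 * (Real.pi : ℂ) * Complex.I * j * (v : ℂ) / n) := by
  have hne : (n : ℂ) ≠ 0 := Nat.cast_ne_zero.mpr (NeZero.ne n)
  conv_rhs => rw [show v = v % n + n * (v / n) from (Nat.mod_add_div v n).symm]
  have h : 2 * (Real.pi : ℂ) * Complex.I * j * ((v % n + n * (v / n) : ℕ) : ℂ) / n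
      = 2 * (Real.pi : ℂ) * Complex.I * j * ((v % n : ℕ) : ℂ) / n
        + 2 * (Real.pi : ℂ) * Complex.I * ((j * (v / n) : ℕ) : ℂ) := by
    push_cast
    field_simp
  rw [h, Complex.exp_add, aux_exp_twopi_nat, mul_one]

/-- The character `ρ_j` as a monoid homomorphism to `ℂˣ`. -/
noncomputable def chiU (n : ℕ) [NeZero n] (j : ℕ) : Cyc n →* ℂˣ where
  toFun g := Units.mk0 (rho n j g) (Complex.exp_ne_zero _)
  map_one' := by
    ext
    show rho n j 1 = 1
    simp [rho]
  map_mul' g h := by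
    ext
    show rho n j (g * h) = rho n j g * rho n j h
    unfold rho
    rw [← Complex.exp_add]
    have hval : ((Multiplicative.toAdd (g * h)).val : ℕ)
        = ((Multiplicative.toAdd g).val + (Multiplicative.toAdd h).val) % n := by
      show ((Multiplicative.toAdd g + Multiplicative.toAdd h).val) = _
      exact ZMod.val_add _ _
    rw [hval, aux_exp_div_mod]
    congr 1
    push_cast
    ring

lemma aux_rho_mem_RCa (n : ℕ) [NeZero n] (j : ℕ) : rho n j ∈ RCa (Cyc n) :=
  AddSubgroup.subset_closure ⟨chiU n j, rfl⟩

/-! ### The sum `S_j` and integrality of the coefficients -/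

/-- `S_j = ∑_s k_s r_{sj}`. -/
def SN (n : ℕ) (L : List (Cyc n)) (j : ℕ) : ℕ :=
  (L.map (fun γ => termN n (Multiplicative.toAdd γ).val j)).sum

lemma aux_toAdd_prod (n : ℕ) (L : List (Cyc n)) :
    Multiplicative.toAdd L.prod = (L.map Multiplicative.toAdd).sum := by
  induction L with
  | nil => simp
  | cons a t ih => simp [ih]

lemma aux_sum_val_dvd (n : ℕ) [NeZero n] (L : List (Cyc n)) (h : L.prod = 1) :
    n ∣ (L.map (fun γ => (Multiplicative.toAdd γ).val)).sum := by
  rw [← ZMod.natCast_eq_zero_iff]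
  rw [Nat.cast_list_sum, List.map_map]
  have he : (Nat.cast ∘ fun γ : Cyc n => (Multiplicative.toAdd γ).val)
      = fun γ : Cyc n => Multiplicative.toAdd γ := by
    funext γ
    exact ZMod.natCast_zmod_val _
  rw [he, ← aux_toAdd_prod, h]
  rfl

lemma aux_SN_modEq (n : ℕ) [NeZero n] (L : List (Cyc n)) (j : ℕ) :
    SN n L j ≡ j * (L.map (fun γ => (Multiplicative.toAdd γ).val)).sum [MOD n] := by
  induction L with
  | nil => simpa [SN] using Nat.ModEq.refl 0
  | cons a t ih =>
      have h1 : SN n (a :: t) j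
          = termN n (Multiplicative.toAdd a).val j + SN n t j := by simp [SN]
      have h2 : j * ((a :: t).map (fun γ => (Multiplicative.toAdd γ).val)).sum
          = j * (Multiplicative.toAdd a).val
            + j * (t.map (fun γ => (Multiplicative.toAdd γ).val)).sum := by
        simp [Nat.mul_add]
      rw [h1, h2]
      exact (aux_termN_modEq' n _ j (NeZero.ne n)).add ih

lemma aux_SN_dvd (n : ℕ) [NeZero n] (L : List (Cyc n)) (j : ℕ) (h : L.prod = 1) :
    n ∣ SN n L j := by
  have h1 := aux_SN_modEq n L j
  have h2 : j * (L.map (fun γ => (Multiplicative.toAdd γ).val)).sum ≡ 0 [MOD n] :=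
    Nat.modEq_zero_iff_dvd.mpr ((aux_sum_val_dvd n L h).mul_left j)
  exact Nat.modEq_zero_iff_dvd.mp (h1.trans h2)

lemma aux_SN_symm (n : ℕ) [NeZero n] (L : List (Cyc n)) (j : ℕ) (hj1 : 1 ≤ j) (hj : j < n) :
    SN n (L.map (fun γ => γ⁻¹)) j = SN n L (n - j) := by
  unfold SN
  rw [List.map_map]
  have hfun : ((fun γ : Cyc n => termN n (Multiplicative.toAdd γ).val j) ∘ fun γ => γ⁻¹)
      = fun γ : Cyc n => termN n (Multiplicative.toAdd γ).val (n - j) := by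
    funext γ
    show termN n (Multiplicative.toAdd γ⁻¹).val j = _
    have h : (Multiplicative.toAdd γ⁻¹).val = (n - (Multiplicative.toAdd γ).val) % n :=
      ZMod.neg_val' (Multiplicative.toAdd γ)
    rw [h]
    exact aux_termN_symm n _ j (ZMod.val_lt _) hj1 hj
  rw [hfun]

/-! ### The normal form of `thetaFun` -/

lemma aux_thetaFun_eq (n : ℕ) [NeZero n] (L : List (Cyc n)) (h : L.prod = 1) :
    thetaFun n L = ∑ j ∈ Finset.Ico 1 n,
      (((L.length : ℤ) - ((SN n L j / n : ℕ) : ℤ)) • rho n j) := by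
  unfold thetaFun
  refine Finset.sum_congr rfl (fun j hj => ?_)
  have hdvd : n ∣ SN n L j := aux_SN_dvd n L j h
  have hne : (n : ℂ) ≠ 0 := Nat.cast_ne_zero.mpr (NeZero.ne n)
  have hsum : (L.map (fun γ => ((n.gcd (Multiplicative.toAdd γ).val
      * rVal n (Multiplicative.toAdd γ).val j : ℕ) : ℂ))).sum = ((SN n L j : ℕ) : ℂ) := by
    rw [SN, Nat.cast_list_sum, List.map_map]
    rfl
  rw [hsum, ← Int.cast_smul_eq_zsmul ℂ]
  congr 1
  rw [Int.cast_sub, Int.cast_natCast, Int.cast_natCast, Nat.cast_div hdvd hne]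

lemma aux_thetaFun_mem (n : ℕ) [NeZero n] (L : List (Cyc n)) (h : L.prod = 1) :
    thetaFun n L ∈ RCa (Cyc n) := by
  rw [aux_thetaFun_eq n L h]
  exact AddSubgroup.sum_mem _
    (fun j _ => AddSubgroup.zsmul_mem _ (aux_rho_mem_RCa n j) _)

/-! ### Conjugation -/

lemma aux_conj_rho (n : ℕ) [NeZero n] (j : ℕ) (hj1 : 1 ≤ j) (hj : j < n) :
    conjFun (Cyc n) (rho n j) = rho n (n - j) := by
  funext g
  set v : ℕ := (Multiplicative.toAdd g).val with hv
  show (starRingEnd ℂ)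
      (Complex.exp (2 * (Real.pi : ℂ) * Complex.I * j * (v : ℂ) / n))
      = Complex.exp (2 * (Real.pi : ℂ) * Complex.I * ((n - j : ℕ) : ℂ) * (v : ℂ) / n)
  rw [← Complex.exp_conj]
  have hne : (n : ℂ) ≠ 0 := Nat.cast_ne_zero.mpr (NeZero.ne n)
  have hc : (starRingEnd ℂ) (2 * (Real.pi : ℂ) * Complex.I * j * (v : ℂ) / n)
      = -(2 * (Real.pi : ℂ) * Complex.I * j * (v : ℂ) / n) := by
    simp only [map_div₀, map_mul, Complex.conj_I, map_ofNat, Complex.conj_natCast,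
      Complex.conj_ofReal]
    ring
  rw [hc]
  have hcast : ((n - j : ℕ) : ℂ) = (n : ℂ) - (j : ℂ) := by
    push_cast [Nat.cast_sub (le_of_lt hj)]
    ring
  rw [hcast]
  rw [show 2 * (Real.pi : ℂ) * Complex.I * ((n : ℂ) - (j : ℂ)) * (v : ℂ) / n
      = 2 * (Real.pi : ℂ) * Complex.I * (v : ℕ)
        + -(2 * (Real.pi : ℂ) * Complex.I * j * (v : ℂ) / n) by
    field_simp
    ring]
  rw [Complex.exp_add, aux_exp_twopi_nat, one_mul]

lemma aux_sum_Ico_reflect {M : Type*} [AddCommMonoid M] (n : ℕ) (F : ℕ → M) :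
    ∑ j ∈ Finset.Ico 1 n, F (n - j) = ∑ j ∈ Finset.Ico 1 n, F j := by
  refine Finset.sum_nbij' (fun j => n - j) (fun j => n - j) ?_ ?_ ?_ ?_ (fun a _ => rfl)
  all_goals intro a ha
  all_goals simp only [Finset.mem_Ico] at *
  all_goals omega

lemma aux_conj_thetaFun (n : ℕ) [NeZero n] (L : List (Cyc n)) (h : L.prod = 1) :
    conjFun (Cyc n) (thetaFun n L) = thetaFun n (L.map (fun γ => γ⁻¹)) := by
  have h' : (L.map (fun γ => γ⁻¹)).prod = 1 := by
    rw [aux_prod_map_inv, h, inv_one]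
  rw [aux_thetaFun_eq n L h, aux_thetaFun_eq n _ h', map_sum]
  rw [← aux_sum_Ico_reflect n
    (fun j => ((((L.map (fun γ => γ⁻¹)).length : ℤ)
      - ((SN n (L.map (fun γ => γ⁻¹)) j / n : ℕ) : ℤ)) • rho n j))]
  refine Finset.sum_congr rfl (fun j hj => ?_)
  rw [Finset.mem_Ico] at hj
  obtain ⟨hj1, hj2⟩ := hj
  rw [map_zsmul, aux_conj_rho n j hj1 hj2]
  have e1 : (L.map (fun γ => γ⁻¹)).length = L.length := List.length_map _
  have e2 : SN n (L.map (fun γ => γ⁻¹)) (n - j) = SN n L j := by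
    rw [aux_SN_symm n L (n - j) (by omega) (by omega), show n - (n - j) = j by omega]
  rw [e1, e2]


/-- For every `α ∈ 𝔹_{C_n}` one has `θ(-α) = conj (θ α)`; consequently
`θ(α) + conj (θ α) = 0`, i.e. the image of `θ` is contained in
`𝔸_{C_n} = {a : a + ā = 0}`. -/
theorem theta_neg_eq_conj (n : ℕ) [NeZero n] (θ : BG (Cyc n) →+ RTilde (Cyc n))
    (hθ : IsTheta θ) :
    (∀ α : BG (Cyc n), θ (-α) = conjQ (Cyc n) (θ α)) ∧
    (∀ α : BG (Cyc n), θ α ∈ AG (Cyc n)) := by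
  have main : ∀ α : BG (Cyc n), θ (-α) = conjQ (Cyc n) (θ α) := by
    intro α
    obtain ⟨L, hL, rfl⟩ := aux_exists_bmk α
    have hprod : L.prod = 1 := aux_prod_eq_one_of_mem_lambdaKer hL
    have hprod' : (L.map (fun γ => γ⁻¹)).prod = 1 := by
      rw [aux_prod_map_inv, hprod, inv_one]
    have hL' : bdatum (Cyc n) (L.map (fun γ => γ⁻¹)) ∈ lambdaKer (Cyc n) :=
      bdatum_mem_lambdaKer_of_prod_eq_one _ hprod'
    have hmem : thetaFun n L ∈ RCa (Cyc n) := aux_thetaFun_mem n L hprod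
    have hmem' : thetaFun n (L.map (fun γ => γ⁻¹)) ∈ RCa (Cyc n) :=
      aux_thetaFun_mem n _ hprod'
    have h1 := hθ L hL ⟨thetaFun n L, hmem⟩ rfl
    have h2 := hθ (L.map (fun γ => γ⁻¹)) hL' ⟨thetaFun n _, hmem'⟩ rfl
    rw [aux_bmk_neg L hL hL', h2, h1]
    unfold conjQ
    rw [QuotientAddGroup.map_mk]
    congr 1
    refine Subtype.ext ?_
    exact (aux_conj_thetaFun n L hprod).symm
  refine ⟨main, fun α => ?_⟩
  rw [mem_AG_iff, ← main α, ← map_add, add_neg_cancel, map_zero]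
end

section
/- Let $p$ be an odd prime, $G=\mathbb{Z}/p\mathbb{Z}\times\mathbb{Z}/p\mathbb{Z}$, and let $G_0,\ldots,G_p$ be the $p+1$ distinct subgroups of $G$ of order $p$. Then (i) the composite $\bigoplus_j\widetilde{Res}^G_{G_j}\circ\bigoplus_j\widetilde{Ind}^G_{G_j}:\bigoplus_{j=0}^{p}\mathbb{A}_{G_j}\to\bigoplus_{j=0}^{p}\mathbb{A}_{G_j}$ is multiplication by $p$ (indeed $\widetilde{Res}^G_{G_l}\circ\widetilde{Ind}^G_{G_j}$ is multiplication by $p$ on $\mathbb{A}_{G_j}$ if $l=j$ and is the zero map if $l\neq j$), and (ii) the composite $\bigoplus_j\widetilde{Ind}^G_{G_j}\circ\bigoplus_j\widetilde{Res}^G_{G_j}:\mathbb{A}_G\to\mathbb{A}_G$ is multiplication by $p$. -/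
/-- Restriction of a (virtual) character of `G` to a subgroup `K`, at the level of
functions. -/
def resSubFun {G : Type*} [Group G] (K : Subgroup G) (f : G → ℂ) : ↥K → ℂ :=
  fun x => f (x : G)

open scoped Classical in
/-- The character of `G` induced from a character `f` of a subgroup `K` of an abelian
group `G`: by the standard induced-character formula it vanishes off `K` and equals
`[G : K] ⬝ f` on `K`. -/
noncomputable def indSubFun {G : Type*} [CommGroup G] (K : Subgroup G) (f : ↥K → ℂ) :
    G → ℂ :=
  fun g => (Nat.card (G ⧸ K) : ℂ) * (if h : g ∈ K then f ⟨g, h⟩ else 0)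

/-- `R` is the homomorphism `R_ℂ G / E_G → R_ℂ K / E_K` induced by restriction of
characters. -/
def IsResSub {G : Type*} [CommGroup G] (K : Subgroup G)
    (R : RTilde G →+ RTilde ↥K) : Prop :=
  ∀ (r : RCa G) (r' : RCa ↥K),
    (r' : ↥K → ℂ) = resSubFun K (r : G → ℂ) →
      R (QuotientAddGroup.mk r) = QuotientAddGroup.mk r'

/-- `I` is the homomorphism `R_ℂ K / E_K → R_ℂ G / E_G` induced by induction of
characters. -/
def IsIndSub {G : Type*} [CommGroup G] (K : Subgroup G)
    (I : RTilde ↥K →+ RTilde G) : Prop :=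
  ∀ (r' : RCa ↥K) (r : RCa G),
    (r : G → ℂ) = indSubFun K (r' : ↥K → ℂ) →
      I (QuotientAddGroup.mk r') = QuotientAddGroup.mk r


section Aux
variable {p : ℕ} [hpf : Fact p.Prime]

noncomputable def zetu (p : ℕ) [Fact p.Prime] : ℂˣ :=
  ((Complex.isPrimitiveRoot_exp p (Nat.Prime.ne_zero Fact.out)).isUnit
    (Nat.Prime.ne_zero Fact.out)).unit

lemma zetu_prim (p : ℕ) [Fact p.Prime] : IsPrimitiveRoot (zetu p) p :=
  IsPrimitiveRoot.isUnit_unit (Nat.Prime.ne_zero Fact.out) (Complex.isPrimitiveRoot_exp p (Nat.Prime.ne_zero Fact.out))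

lemma zetu_pow_p (p : ℕ) [Fact p.Prime] : (zetu p) ^ p = 1 := (zetu_prim p).pow_eq_one

/-- `Zc t = ζ^(t.val)` -/
noncomputable def Zc (p : ℕ) [Fact p.Prime] (t : ZMod p) : ℂˣ := zetu p ^ t.val

lemma Zc_natCast (n : ℕ) : Zc p (n : ZMod p) = zetu p ^ n := by
  rw [Zc, ZMod.val_natCast, ← pow_eq_pow_mod n (zetu_pow_p p)]

lemma Zc_zero : Zc p 0 = 1 := by
  simpa using Zc_natCast (p := p) 0

lemma Zc_add (s t : ZMod p) : Zc p (s + t) = Zc p s * Zc p t := by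
  have : ((s.val + t.val : ℕ) : ZMod p) = s + t := by push_cast [ZMod.natCast_val]; simp
  rw [← this, Zc_natCast, pow_add, Zc, Zc]

lemma Zc_mul_natCast (n : ℕ) (t : ZMod p) : Zc p ((n : ZMod p) * t) = (Zc p t) ^ n := by
  induction n with
  | zero => simpa using Zc_zero
  | succ k ih => push_cast; rw [add_mul, one_mul, Zc_add, ih, pow_succ]

lemma Zc_eq_one_iff (t : ZMod p) : Zc p t = 1 ↔ t = 0 := by
  constructor
  · intro h
    have := (zetu_prim p).pow_eq_one_iff_dvd t.val
    rw [Zc] at h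
    have hd := this.mp h
    have hlt : t.val < p := ZMod.val_lt t
    have : t.val = 0 := Nat.eq_zero_of_dvd_of_lt hd hlt
    exact (ZMod.val_eq_zero t).mp this
  · rintro rfl; exact Zc_zero
end Aux

section Aux2
variable {p : ℕ} [hpf : Fact p.Prime]

lemma sum_Zc (f : ZMod p → ℂ) : ∑ t : ZMod p, f t = ∑ i ∈ Finset.range p, f (i : ZMod p) := by
  haveI : NeZero p := ⟨(Fact.out (p := p.Prime)).ne_zero⟩
  refine Finset.sum_nbij' (fun t : ZMod p => t.val) (fun i : ℕ => (i : ZMod p)) ?_ ?_ ?_ ?_ ?_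
  · intro t _; exact Finset.mem_range.mpr (ZMod.val_lt t)
  · intro i _; exact Finset.mem_univ _
  · intro t _; exact ZMod.natCast_rightInverse t
  · intro i hi; exact ZMod.val_natCast_of_lt (Finset.mem_range.mp hi)
  · intro t _; exact congrArg f (ZMod.natCast_rightInverse t).symm

lemma sum_Zc_mul (d : ZMod p) :
    ∑ s : ZMod p, ((Zc p (s * d) : ℂ)) = if d = 0 then (p : ℂ) else 0 := by
  split_ifs with hd
  · subst hd
    simp [Zc_zero, ZMod.card, Finset.card_univ]
  · have hbij : Function.Bijective (fun s : ZMod p => s * d) :=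
      Finite.injective_iff_bijective.mp (mul_left_injective₀ hd)
    rw [Fintype.sum_bijective _ hbij (fun s => ((Zc p (s * d) : ℂ))) (fun t => (Zc p t : ℂ)) (fun s => rfl)]
    rw [sum_Zc (fun t => (Zc p t : ℂ))]
    have h1 : ∀ i ∈ Finset.range p, ((Zc p (i : ZMod p) : ℂ)) = ((zetu p : ℂ)) ^ i := by
      intro i _
      rw [Zc_natCast]; push_cast; ring
    rw [Finset.sum_congr rfl h1, geom_sum_eq, ← Units.val_pow_eq_pow_val, zetu_pow_p]
    · simp
    · intro h
      have := (zetu_prim p).ne_one (Fact.out (p := p.Prime)).one_lt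
      exact this (Units.ext h)
end Aux2
/-! ### Auxiliary machinery -/

section AuxGeneric
variable {H : Type*} [CommGroup H]

open scoped Classical in
lemma permChar_bot :
    permChar (⊥ : Subgroup H) = fun g => if g = 1 then (Nat.card H : ℂ) else 0 := by
  funext g
  unfold permChar
  by_cases hg : g = 1
  · subst hg
    rw [if_pos rfl]
    congr 1
    have e1 : {x : H ⧸ (⊥ : Subgroup H) // (1 : H) • x = x} ≃ (H ⧸ (⊥ : Subgroup H)) :=
      Equiv.subtypeUnivEquiv (fun x => one_smul _ x)
    rw [Nat.card_congr e1, Nat.card_congr (QuotientGroup.quotientBot (G := H)).toEquiv]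
  · rw [if_neg hg]
    have : IsEmpty {x : H ⧸ (⊥ : Subgroup H) // g • x = x} := by
      constructor
      rintro ⟨x, hx⟩
      obtain ⟨z, rfl⟩ := QuotientGroup.mk_surjective x
      have h1 : ((g * z : H) : H ⧸ (⊥ : Subgroup H)) = (z : H ⧸ (⊥ : Subgroup H)) := hx
      rw [QuotientGroup.eq] at h1
      have h2 : (g * z)⁻¹ * z = 1 := Subgroup.mem_bot.mp h1
      rw [mul_inv_rev, mul_comm z⁻¹ g⁻¹, mul_assoc, inv_mul_cancel, mul_one] at h2
      exact hg (inv_eq_one.mp h2)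
    simp [Nat.card_of_isEmpty]

lemma RCa_val_one {f : H → ℂ} (hf : f ∈ RCa H) : ∃ n : ℤ, f 1 = n := by
  refine AddSubgroup.closure_induction ?_ ?_ ?_ ?_ hf
  · rintro f ⟨χ, rfl⟩; exact ⟨1, by simp⟩
  · exact ⟨0, by simp⟩
  · rintro f g' _ _ ⟨n, hn⟩ ⟨k, hk⟩
    exact ⟨n + k, by simp only [Pi.add_apply, hn, hk]; push_cast; ring⟩
  · rintro f _ ⟨n, hn⟩; exact ⟨-n, by simp only [Pi.neg_apply, hn]; push_cast; ring⟩

/-- Restriction as an additive hom. -/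
def resHom (K : Subgroup H) : (H → ℂ) →+ (↥K → ℂ) where
  toFun := resSubFun K
  map_zero' := rfl
  map_add' _ _ := rfl

lemma resSubFun_mem (K : Subgroup H) {f : H → ℂ} (hf : f ∈ RCa H) :
    resSubFun K f ∈ RCa ↥K := by
  have hle : RCa H ≤ AddSubgroup.comap (resHom K) (RCa ↥K) := by
    rw [RCa, AddSubgroup.closure_le]
    rintro f ⟨χ, rfl⟩
    exact AddSubgroup.subset_closure ⟨χ.comp K.subtype, rfl⟩
  exact hle hf

/-- Induction as an additive hom. -/
noncomputable def indHom (K : Subgroup H) : (↥K → ℂ) →+ (H → ℂ) where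
  toFun := indSubFun K
  map_zero' := by funext g; simp [indSubFun]
  map_add' f₁ f₂ := by
    funext g
    simp only [indSubFun, Pi.add_apply]
    split_ifs
    · ring
    · ring

end AuxGeneric
section AuxChar
variable {p : ℕ} [hpf : Fact p.Prime]

/-- The character `x ↦ ζ^(a x₁ + b x₂)` of `(ℤ/p)²`. -/
noncomputable def chr (p : ℕ) [Fact p.Prime] (a b : ZMod p) :
    Multiplicative (ZMod p × ZMod p) →* ℂˣ where
  toFun x := Zc p (a * (Multiplicative.toAdd x).1 + b * (Multiplicative.toAdd x).2)
  map_one' := by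
    show Zc p (a * (0 : ZMod p × ZMod p).1 + b * (0 : ZMod p × ZMod p).2) = 1
    simpa using Zc_zero (p := p)
  map_mul' x y := by
    have h0 : Multiplicative.toAdd (x * y)
        = Multiplicative.toAdd x + Multiplicative.toAdd y := rfl
    simp only [h0, Prod.fst_add, Prod.snd_add]
    rw [← Zc_add]
    congr 1
    ring

lemma exists_gen {H : Type*} [CommGroup H] (K : Subgroup H) (hK : Nat.card K = p) :
    ∃ v : H, v ∈ K ∧ v ≠ 1 ∧ orderOf v = p ∧ K = Subgroup.zpowers v := by
  have hp : p.Prime := Fact.out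
  have hfin : Finite K := Nat.finite_of_card_ne_zero (by rw [hK]; exact hp.ne_zero)
  obtain hbot | ⟨v, hv, hv1⟩ := K.bot_or_exists_ne_one
  · exfalso
    rw [hbot, Subgroup.card_bot] at hK
    exact hp.one_lt.ne hK
  have hdvd : orderOf v ∣ p := hK ▸ K.orderOf_dvd_natCard hv
  have ho : orderOf v = p := by
    rcases (Nat.Prime.eq_one_or_self_of_dvd hp _ hdvd) with h | h
    · exact absurd (orderOf_eq_one_iff.mp h) hv1
    · exact h
  refine ⟨v, hv, hv1, ho, ?_⟩
  refine (Subgroup.eq_of_le_of_card_ge (Subgroup.zpowers_le.mpr hv) ?_).symm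
  rw [hK, Nat.card_zpowers, ho]

set_option linter.unusedSectionVars false in
lemma card_Gp : Nat.card (Multiplicative (ZMod p × ZMod p)) = p * p := by
  haveI : NeZero p := ⟨(Fact.out (p := p.Prime)).ne_zero⟩
  rw [Nat.card_congr (Multiplicative.toAdd (α := ZMod p × ZMod p)), Nat.card_prod, Nat.card_zmod]

lemma card_quot (K : Subgroup (Multiplicative (ZMod p × ZMod p))) (hK : Nat.card K = p) :
    Nat.card (Multiplicative (ZMod p × ZMod p) ⧸ K) = p := by
  have hp : p.Prime := Fact.out
  have h := Subgroup.card_eq_card_quotient_mul_card_subgroup K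
  rw [card_Gp, hK] at h
  exact (Nat.eq_of_mul_eq_mul_right hp.pos h.symm)

lemma exists_sol {w : ZMod p × ZMod p} (hw : w ≠ 0) (m : ZMod p) :
    ∃ a₀ b₀ : ZMod p, a₀ * w.1 + b₀ * w.2 = m := by
  by_cases h1 : w.1 = 0
  · have h2 : w.2 ≠ 0 := fun h => hw (Prod.ext h1 h)
    exact ⟨0, m * w.2⁻¹, by rw [h1]; field_simp; simp⟩
  · exact ⟨m * w.1⁻¹, 0, by field_simp; simp⟩

lemma ind_chr_mem (K : Subgroup (Multiplicative (ZMod p × ZMod p)))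
    (hK : Nat.card K = p) (χ : ↥K →* ℂˣ) :
    indSubFun K (fun k => (χ k : ℂ)) ∈ RCa (Multiplicative (ZMod p × ZMod p)) := by
  classical
  haveI : NeZero p := ⟨(Fact.out (p := p.Prime)).ne_zero⟩
  obtain ⟨v, hvK, hv1, hord, hKz⟩ := exists_gen K hK
  set w : ZMod p × ZMod p := Multiplicative.toAdd v with hw_def
  have hw : w ≠ 0 := by
    intro h
    exact hv1 (Multiplicative.toAdd.injective (by simpa [hw_def] using h))
  have hvp : v ^ p = 1 := by
    have := pow_orderOf_eq_one v
    rwa [hord] at this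
  set v' : ↥K := ⟨v, hvK⟩ with hv'_def
  have hv'p : v' ^ p = 1 := by
    apply Subtype.ext
    simpa using hvp
  have hχp : ((χ v' : ℂ)) ^ p = 1 := by
    rw [← Units.val_pow_eq_pow_val, ← map_pow, hv'p, map_one, Units.val_one]
  have hprimC : IsPrimitiveRoot ((zetu p : ℂˣ) : ℂ) p :=
    IsPrimitiveRoot.coe_units_iff.mpr (zetu_prim p)
  obtain ⟨m, hmp, hm⟩ := hprimC.eq_pow_of_pow_eq_one hχp
  obtain ⟨a₀, b₀, ha₀b₀⟩ := exists_sol hw (m : ZMod p)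
  -- the function as a sum of characters
  have key : (∑ s : ZMod p,
        (fun g => ((chr p (a₀ - s * w.2) (b₀ + s * w.1) g : ℂ))))
      = indSubFun K (fun k => (χ k : ℂ)) := by
    funext g
    rw [Finset.sum_apply]
    set u : ZMod p × ZMod p := Multiplicative.toAdd g with hu_def
    have hterm : ∀ s : ZMod p, ((chr p (a₀ - s * w.2) (b₀ + s * w.1) g : ℂ))
        = (Zc p (a₀ * u.1 + b₀ * u.2) : ℂ) * (Zc p (s * (w.1 * u.2 - w.2 * u.1)) : ℂ) := by
      intro s
      show ((Zc p ((a₀ - s * w.2) * u.1 + (b₀ + s * w.1) * u.2) : ℂ)) = _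
      rw [show (a₀ - s * w.2) * u.1 + (b₀ + s * w.1) * u.2
          = (a₀ * u.1 + b₀ * u.2) + s * (w.1 * u.2 - w.2 * u.1) by ring, Zc_add, Units.val_mul]
    rw [Finset.sum_congr rfl (fun s _ => hterm s), ← Finset.mul_sum, sum_Zc_mul]
    have hK_of_d : w.1 * u.2 - w.2 * u.1 = 0 → g ∈ K := by
      intro hd0
      rw [sub_eq_zero] at hd0
      have : ∃ t : ZMod p, t * w.1 = u.1 ∧ t * w.2 = u.2 := by
        by_cases h1 : w.1 = 0
        · have h2 : w.2 ≠ 0 := fun h => hw (Prod.ext h1 h)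
          refine ⟨u.2 * w.2⁻¹, ?_, ?_⟩
          · rw [h1] at hd0 ⊢
            rw [mul_zero]
            have : w.2 * u.1 = 0 := by rw [← hd0]; ring
            rcases mul_eq_zero.mp this with h | h
            · exact absurd h h2
            · exact h.symm
          · field_simp
        · refine ⟨u.1 * w.1⁻¹, ?_, ?_⟩
          · field_simp
          · field_simp
            calc u.1 * w.2 = w.2 * u.1 := by ring
            _ = w.1 * u.2 := hd0.symm
            _ = w.1 * u.2 := by ring
      obtain ⟨t, ht1, ht2⟩ := this
      have hg : g = v ^ t.val := by
        apply Multiplicative.toAdd.injective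
        rw [toAdd_pow, ← hu_def, ← hw_def]
        apply Prod.ext
        · rw [Prod.smul_fst, nsmul_eq_mul, ZMod.natCast_val, ZMod.cast_id, ht1]
        · rw [Prod.smul_snd, nsmul_eq_mul, ZMod.natCast_val, ZMod.cast_id, ht2]
      rw [hg, hKz]
      exact Subgroup.pow_mem _ (Subgroup.mem_zpowers v) _
    by_cases hgK : g ∈ K
    · -- `g = v ^ n`
      have : g ∈ Subgroup.zpowers v := hKz ▸ hgK
      have hfin : IsOfFinOrder v := by
        rw [← orderOf_pos_iff, hord]; exact (Fact.out (p := p.Prime)).pos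
      obtain ⟨n, hn⟩ := (Submonoid.mem_powers_iff _ _).mp
        (hfin.mem_powers_iff_mem_zpowers.mpr this)
      -- hn : v ^ n = g
      have hu : u = n • w := by rw [hu_def, hw_def, ← hn, toAdd_pow]
      have hu1 : u.1 = (n : ZMod p) * w.1 := by rw [hu, Prod.smul_fst, nsmul_eq_mul]
      have hu2 : u.2 = (n : ZMod p) * w.2 := by rw [hu, Prod.smul_snd, nsmul_eq_mul]
      have hd : w.1 * u.2 - w.2 * u.1 = 0 := by rw [hu1, hu2]; ring
      rw [if_pos hd]
      have hc : a₀ * u.1 + b₀ * u.2 = ((n * m : ℕ) : ZMod p) := by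
        rw [hu1, hu2]
        calc a₀ * ((n : ZMod p) * w.1) + b₀ * ((n : ZMod p) * w.2)
            = (n : ZMod p) * (a₀ * w.1 + b₀ * w.2) := by ring
          _ = (n : ZMod p) * (m : ZMod p) := by rw [ha₀b₀]
          _ = ((n * m : ℕ) : ZMod p) := by push_cast; ring
      rw [hc, Zc_natCast]
      show _ = indSubFun K (fun k => (χ k : ℂ)) g
      unfold indSubFun
      rw [dif_pos hgK, card_quot K hK]
      have hgv : (⟨g, hgK⟩ : ↥K) = v' ^ n := by
        apply Subtype.ext
        simpa using hn.symm
      rw [hgv]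
      have hχn : ((χ (v' ^ n) : ℂˣ) : ℂ) = ((zetu p : ℂ)) ^ (m * n) := by
        rw [map_pow, Units.val_pow_eq_pow_val, ← hm, ← pow_mul]
      show (((zetu p ^ (n * m) : ℂˣ)) : ℂ) * (p : ℂ) = (p : ℂ) * ((χ (v' ^ n) : ℂˣ) : ℂ)
      rw [hχn, Units.val_pow_eq_pow_val, mul_comm n m]
      ring
    · have hd : w.1 * u.2 - w.2 * u.1 ≠ 0 := fun h => hgK (hK_of_d h)
      rw [if_neg hd, mul_zero]
      show (0 : ℂ) = indSubFun K (fun k => (χ k : ℂ)) g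
      unfold indSubFun
      rw [dif_neg hgK, mul_zero]
  rw [← key]
  apply AddSubgroup.sum_mem
  intro s _
  exact AddSubgroup.subset_closure ⟨chr p (a₀ - s * w.2) (b₀ + s * w.1), rfl⟩

lemma indSubFun_mem (K : Subgroup (Multiplicative (ZMod p × ZMod p)))
    (hK : Nat.card K = p) {f : ↥K → ℂ} (hf : f ∈ RCa ↥K) :
    indSubFun K f ∈ RCa (Multiplicative (ZMod p × ZMod p)) := by
  have hle : RCa ↥K ≤ AddSubgroup.comap (indHom K) (RCa (Multiplicative (ZMod p × ZMod p))) := by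
    rw [RCa, AddSubgroup.closure_le]
    rintro f ⟨χ, rfl⟩
    exact ind_chr_mem K hK χ
  exact hle hf

end AuxChar

lemma exists_mem_Gsub {p : ℕ} [hpf : Fact p.Prime]
    (Gsub : Fin (p + 1) → Subgroup (Multiplicative (ZMod p × ZMod p)))
    (hcard : ∀ j, Nat.card (Gsub j) = p)
    (htriv : ∀ j l, j ≠ l → ∀ x, x ∈ Gsub j → x ∈ Gsub l → x = 1)
    {g : Multiplicative (ZMod p × ZMod p)} (hg : g ≠ 1) : ∃ j, g ∈ Gsub j := by
  classical
  haveI : NeZero p := ⟨(Fact.out (p := p.Prime)).ne_zero⟩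
  have hp : p.Prime := Fact.out
  set T : Fin (p + 1) → Finset (Multiplicative (ZMod p × ZMod p)) :=
    fun j => (Finset.univ.filter (· ∈ Gsub j)).erase 1 with hT
  have hTcard : ∀ j, (T j).card = p - 1 := by
    intro j
    rw [hT]
    rw [Finset.card_erase_of_mem (by simp [Subgroup.one_mem])]
    have h1 : (Finset.univ.filter (· ∈ Gsub j)).card = p := by
      rw [← Fintype.card_subtype, ← Nat.card_eq_fintype_card]
      exact hcard j
    rw [h1]
  set B : Finset (Multiplicative (ZMod p × ZMod p)) := Finset.univ.biUnion T with hB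
  have hdisj : ∀ j ∈ (Finset.univ : Finset (Fin (p+1))), ∀ l ∈ Finset.univ, j ≠ l →
      Disjoint (T j) (T l) := by
    intro j _ l _ hjl
    rw [Finset.disjoint_left]
    intro x hxj hxl
    rw [hT] at hxj hxl
    simp only [Finset.mem_erase, Finset.mem_filter] at hxj hxl
    exact hxj.1 (htriv j l hjl x hxj.2.2 hxl.2.2)
  have hBcard : B.card = p * p - 1 := by
    rw [hB, Finset.card_biUnion hdisj]
    have : ∀ j ∈ (Finset.univ : Finset (Fin (p+1))), (T j).card = p - 1 :=
      fun j _ => hTcard j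
    rw [Finset.sum_congr rfl this, Finset.sum_const, Finset.card_univ, Fintype.card_fin,
      smul_eq_mul]
    obtain ⟨k, rfl⟩ : ∃ k, p = k + 1 := ⟨p - 1, (Nat.succ_pred_eq_of_pos hp.pos).symm⟩
    have : (k + 1) * (k + 1) = (k + 1 + 1) * (k + 1 - 1) + 1 := by
      simp only [Nat.add_sub_cancel]
      ring
    omega
  have hBU : B = Finset.univ.erase (1 : Multiplicative (ZMod p × ZMod p)) := by
    apply Finset.eq_of_subset_of_card_le
    · intro x hx
      rw [hB, Finset.mem_biUnion] at hx
      obtain ⟨j, _, hxj⟩ := hx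
      rw [hT] at hxj
      exact Finset.mem_erase.mpr ⟨(Finset.mem_erase.mp hxj).1, Finset.mem_univ x⟩
    · rw [Finset.card_erase_of_mem (Finset.mem_univ _), Finset.card_univ, hBcard,
        ← Nat.card_eq_fintype_card, card_Gp]
  have hgB : g ∈ B := by
    rw [hBU]
    exact Finset.mem_erase.mpr ⟨hg, Finset.mem_univ g⟩
  rw [hB, Finset.mem_biUnion] at hgB
  obtain ⟨j, _, hgj⟩ := hgB
  rw [hT] at hgj
  simp only [Finset.mem_erase, Finset.mem_filter] at hgj
  exact ⟨j, hgj.2.2⟩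

/-- Let `p` be an odd prime, `G = ℤ/pℤ × ℤ/pℤ`, and `G₀, …, G_p` its
`p+1` subgroups of order `p`. Then (i) `Res_l ∘ Ind_j` is multiplication by `p` on
`𝔸_{G_j}` when `l = j` and zero when `l ≠ j` (so `⊕Res ∘ ⊕Ind` is multiplication by `p`
on `⊕_j 𝔸_{G_j}`), and (ii) `⊕Ind ∘ ⊕Res` is multiplication by `p` on `𝔸_G`. -/
theorem res_ind_multiplication_by_p (p : ℕ) (hp : p.Prime) (hodd : Odd p)
    (Gsub : Fin (p + 1) → Subgroup (Multiplicative (ZMod p × ZMod p)))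
    (hinj : Function.Injective Gsub)
    (hcard : ∀ j, Nat.card (Gsub j) = p)
    (Res : ∀ j, RTilde (Multiplicative (ZMod p × ZMod p)) →+ RTilde ↥(Gsub j))
    (Ind : ∀ j, RTilde ↥(Gsub j) →+ RTilde (Multiplicative (ZMod p × ZMod p)))
    (hRes : ∀ j, IsResSub (Gsub j) (Res j))
    (hInd : ∀ j, IsIndSub (Gsub j) (Ind j)) :
    (∀ j, ∀ a ∈ AG ↥(Gsub j), Res j (Ind j a) = p • a) ∧
    (∀ j l, j ≠ l → ∀ a ∈ AG ↥(Gsub j), Res l (Ind j a) = 0) ∧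
    (∀ b ∈ AG (Multiplicative (ZMod p × ZMod p)), ∑ j, Ind j (Res j b) = p • b) := by
  haveI hpf : Fact p.Prime := ⟨hp⟩
  haveI : NeZero p := ⟨hp.ne_zero⟩
  have htriv : ∀ (j l : Fin (p + 1)), j ≠ l →
      ∀ x, x ∈ Gsub j → x ∈ Gsub l → x = (1 : Multiplicative (ZMod p × ZMod p)) := by
    intro j l hjl x hxj hxl
    by_contra hx1
    have hdvdj : orderOf x ∣ p := by
      have := (Gsub j).orderOf_dvd_natCard hxj
      rwa [hcard j] at this
    have ho : orderOf x = p :=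
      (hp.eq_one_or_self_of_dvd _ hdvdj).resolve_left
        (fun h => hx1 (orderOf_eq_one_iff.mp h))
    have hfinj : Finite (Gsub j) :=
      Nat.finite_of_card_ne_zero (by rw [hcard j]; exact hp.ne_zero)
    have hfinl : Finite (Gsub l) :=
      Nat.finite_of_card_ne_zero (by rw [hcard l]; exact hp.ne_zero)
    have hj : Subgroup.zpowers x = Gsub j :=
      Subgroup.eq_of_le_of_card_ge (Subgroup.zpowers_le.mpr hxj)
        (by rw [hcard j, Nat.card_zpowers, ho])
    have hl : Subgroup.zpowers x = Gsub l :=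
      Subgroup.eq_of_le_of_card_ge (Subgroup.zpowers_le.mpr hxl)
        (by rw [hcard l, Nat.card_zpowers, ho])
    exact hjl (hinj (hj.symm.trans hl))
  refine ⟨?_, ?_, ?_⟩
  · -- (i) Res_j ∘ Ind_j = multiplication by p
    intro j a _
    obtain ⟨r', rfl⟩ := QuotientAddGroup.mk_surjective a
    have hrmem := indSubFun_mem (Gsub j) (hcard j) r'.2
    set r : RCa (Multiplicative (ZMod p × ZMod p)) :=
      ⟨indSubFun (Gsub j) (r' : ↥(Gsub j) → ℂ), hrmem⟩ with hr
    have h1 := hInd j r' r rfl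
    set r'' : RCa ↥(Gsub j) := ⟨resSubFun (Gsub j) (r : _ → ℂ), resSubFun_mem (Gsub j) r.2⟩
      with hr''
    have h2 := hRes j r r'' rfl
    have h3 : r'' = p • r' := by
      apply Subtype.ext
      funext x
      show resSubFun (Gsub j) (indSubFun (Gsub j) (r' : ↥(Gsub j) → ℂ)) x
        = ((p • r' : RCa ↥(Gsub j)) : ↥(Gsub j) → ℂ) x
      have hco : ((p • r' : RCa ↥(Gsub j)) : ↥(Gsub j) → ℂ) = p • (r' : ↥(Gsub j) → ℂ) := rfl
      rw [hco]
      show indSubFun (Gsub j) (r' : ↥(Gsub j) → ℂ) (x : Multiplicative (ZMod p × ZMod p))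
        = p • ((r' : ↥(Gsub j) → ℂ) x)
      unfold indSubFun
      rw [dif_pos x.2, card_quot (Gsub j) (hcard j)]
      rw [nsmul_eq_mul]
    rw [h1, h2, h3]
    exact (QuotientAddGroup.mk' ((EG ↥(Gsub j)).addSubgroupOf (RCa ↥(Gsub j)))).map_nsmul p r'
  · -- (ii) Res_l ∘ Ind_j = 0 for l ≠ j
    intro j l hjl a _
    obtain ⟨r', rfl⟩ := QuotientAddGroup.mk_surjective a
    have hrmem := indSubFun_mem (Gsub j) (hcard j) r'.2
    set r : RCa (Multiplicative (ZMod p × ZMod p)) :=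
      ⟨indSubFun (Gsub j) (r' : ↥(Gsub j) → ℂ), hrmem⟩ with hr
    have h1 := hInd j r' r rfl
    set r'' : RCa ↥(Gsub l) := ⟨resSubFun (Gsub l) (r : _ → ℂ), resSubFun_mem (Gsub l) r.2⟩
      with hr''
    have h2 := hRes l r r'' rfl
    rw [h1, h2, QuotientAddGroup.eq_zero_iff, AddSubgroup.mem_addSubgroupOf]
    obtain ⟨n, hn⟩ := RCa_val_one r'.2
    have hfun : (r'' : ↥(Gsub l) → ℂ) = n • permChar (⊥ : Subgroup ↥(Gsub l)) := by
      funext x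
      rw [permChar_bot]
      show indSubFun (Gsub j) (r' : ↥(Gsub j) → ℂ) (x : Multiplicative (ZMod p × ZMod p)) = _
      unfold indSubFun
      by_cases hx : (x : Multiplicative (ZMod p × ZMod p)) ∈ Gsub j
      · have hxc : (x : Multiplicative (ZMod p × ZMod p)) = 1 := htriv j l hjl _ hx x.2
        have hx1 : x = 1 := Subtype.ext hxc
        have hK1 : (⟨(x : Multiplicative (ZMod p × ZMod p)), hx⟩ : ↥(Gsub j)) = 1 :=
          Subtype.ext hxc
        rw [dif_pos hx, card_quot (Gsub j) (hcard j), hK1]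
        simp only [hx1, if_pos rfl, hcard l, hn]
        rw [Pi.smul_apply, if_pos rfl, zsmul_eq_mul]
        push_cast
        ring
      · rw [dif_neg hx, mul_zero]
        have hx1 : x ≠ 1 := by
          intro h
          exact hx (by rw [h]; exact (Gsub j).one_mem)
        rw [Pi.smul_apply, if_neg hx1, smul_zero]
    rw [hfun]
    have hmem : permChar (⊥ : Subgroup ↥(Gsub l)) ∈ EG ↥(Gsub l) := by
      rw [EG]
      exact AddSubgroup.subset_closure ⟨(⊥ : Subgroup ↥(Gsub l)), rfl⟩
    exact AddSubgroup.zsmul_mem _ hmem n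
  · -- (iii) ∑ Ind_j ∘ Res_j = multiplication by p
    intro b _
    classical
    obtain ⟨r, rfl⟩ := QuotientAddGroup.mk_surjective b
    set x : Fin (p + 1) → (RCa (Multiplicative (ZMod p × ZMod p))) := fun j =>
      ⟨indSubFun (Gsub j) (resSubFun (Gsub j) (r : Multiplicative (ZMod p × ZMod p) → ℂ)),
        indSubFun_mem (Gsub j) (hcard j) (resSubFun_mem (Gsub j) r.2)⟩ with hx
    have hterm : ∀ j, Ind j (Res j (QuotientAddGroup.mk r)) = QuotientAddGroup.mk (x j) := by
      intro j
      set r'j : RCa ↥(Gsub j) := ⟨resSubFun (Gsub j) (r : Multiplicative (ZMod p × ZMod p) → ℂ), resSubFun_mem (Gsub j) r.2⟩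
        with hr'j
      rw [hRes j r r'j rfl]
      exact hInd j r'j (x j) rfl
    rw [Finset.sum_congr rfl (fun j _ => hterm j)]
    have hsum : (∑ j, (QuotientAddGroup.mk (x j) :
        RTilde (Multiplicative (ZMod p × ZMod p)))) = QuotientAddGroup.mk (∑ j, x j) :=
      (map_sum (QuotientAddGroup.mk' ((EG (Multiplicative (ZMod p × ZMod p))).addSubgroupOf (RCa (Multiplicative (ZMod p × ZMod p))))) x Finset.univ).symm
    have hps : (p • (QuotientAddGroup.mk r : RTilde (Multiplicative (ZMod p × ZMod p))))
        = QuotientAddGroup.mk (p • r) :=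
      ((QuotientAddGroup.mk' _).map_nsmul p r).symm
    rw [hsum, hps, QuotientAddGroup.eq, AddSubgroup.mem_addSubgroupOf]
    obtain ⟨n, hn⟩ := RCa_val_one r.2
    have hxg : ∀ (j : Fin (p + 1)) (g : Multiplicative (ZMod p × ZMod p)),
        ((x j : RCa (Multiplicative (ZMod p × ZMod p))) : Multiplicative (ZMod p × ZMod p) → ℂ) g
          = if g ∈ Gsub j then (p : ℂ) * (r : Multiplicative (ZMod p × ZMod p) → ℂ) g else 0 := by
      intro j g
      show indSubFun (Gsub j) (resSubFun (Gsub j) (r : Multiplicative (ZMod p × ZMod p) → ℂ)) g = _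
      unfold indSubFun
      by_cases h : g ∈ Gsub j
      · rw [dif_pos h, if_pos h, card_quot (Gsub j) (hcard j)]
        rfl
      · rw [dif_neg h, if_neg h, mul_zero]
    have hcoe : ((-(∑ j, x j) + p • r : RCa (Multiplicative (ZMod p × ZMod p))) : Multiplicative (ZMod p × ZMod p) → ℂ)
        = -(∑ j, ((x j : RCa (Multiplicative (ZMod p × ZMod p))) : Multiplicative (ZMod p × ZMod p) → ℂ))
          + p • ((r : RCa (Multiplicative (ZMod p × ZMod p))) : Multiplicative (ZMod p × ZMod p) → ℂ) := by
      have h1 := (RCa (Multiplicative (ZMod p × ZMod p))).subtype.map_add (-(∑ j, x j)) (p • r)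
      have h2 := (RCa (Multiplicative (ZMod p × ZMod p))).subtype.map_neg (∑ j, x j)
      have h3 := map_sum (RCa (Multiplicative (ZMod p × ZMod p))).subtype x Finset.univ
      have h4 := (RCa (Multiplicative (ZMod p × ZMod p))).subtype.map_nsmul p r
      rw [h2, h3, h4] at h1
      exact h1
    have hfun : ((-(∑ j, x j) + p • r : RCa (Multiplicative (ZMod p × ZMod p))) : Multiplicative (ZMod p × ZMod p) → ℂ)
        = (-n) • permChar (⊥ : Subgroup (Multiplicative (ZMod p × ZMod p))) := by
      rw [hcoe]
      funext g
      rw [permChar_bot]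
      simp only [Pi.add_apply, Pi.neg_apply, Finset.sum_apply, Pi.smul_apply, smul_eq_mul,
        nsmul_eq_mul]
      rw [Finset.sum_congr rfl (fun j _ => hxg j g)]
      by_cases hg1 : g = 1
      · subst hg1
        have hall : ∀ j ∈ (Finset.univ : Finset (Fin (p + 1))),
            (if (1 : Multiplicative (ZMod p × ZMod p)) ∈ Gsub j
              then (p : ℂ) * (r : Multiplicative (ZMod p × ZMod p) → ℂ) 1 else 0) = (p : ℂ) * (r : Multiplicative (ZMod p × ZMod p) → ℂ) 1 :=
          fun j _ => if_pos ((Gsub j).one_mem)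
        rw [Finset.sum_congr rfl hall, Finset.sum_const, Finset.card_univ, Fintype.card_fin,
          if_pos rfl, card_Gp, hn]
        push_cast [Pi.mul_apply, Pi.natCast_apply, hn, zsmul_eq_mul]
        ring
      · obtain ⟨j₀, hj₀⟩ := exists_mem_Gsub Gsub hcard htriv hg1
        rw [Finset.sum_eq_single j₀
          (fun j _ hjne => by
            rw [if_neg]
            intro hgj
            exact hg1 (htriv j j₀ hjne g hgj hj₀))
          (fun h => absurd (Finset.mem_univ j₀) h), if_pos hj₀, if_neg hg1]
        simp [Pi.mul_apply]
    rw [hfun]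
    have hmem : permChar (⊥ : Subgroup (Multiplicative (ZMod p × ZMod p)))
        ∈ EG (Multiplicative (ZMod p × ZMod p)) := by
      rw [EG]
      exact AddSubgroup.subset_closure ⟨⊥, rfl⟩
    exact AddSubgroup.zsmul_mem _ hmem (-n)
end

section
/- Let $m$ be an even positive integer and $C_m=\langle x\rangle$ the cyclic group of order $m$. Then $\mathbb{B}_{C_m}$ is a free abelian group of rank $m/2-1$, and the elements $[x,x^i,x^{m-i-1}]$ for $i=1,\ldots,m/2-1$ form a basis of $\mathbb{B}_{C_m}$. -/
open Finsupp

lemma bdatum_triple_mem {G : Type*} [Group G] (a b c : G) (h : a * b * c = 1) :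
    bdatum G [a, b, c] ∈ lambdaKer G :=
  bdatum_mem_lambdaKer_of_prod_eq_one _ (by simpa [mul_assoc] using h)

/-- The standard generator of the cyclic group of order `m`. -/
def xgen (m : ℕ) : Multiplicative (ZMod m) := Multiplicative.ofAdd 1

lemma xgen_pow_card (m : ℕ) : xgen m ^ m = 1 := by
  have : xgen m ^ m = Multiplicative.ofAdd ((m • (1 : ZMod m))) := by
    rw [ofAdd_nsmul]; rfl
  rw [this, nsmul_eq_mul, mul_one]
  simp [ZMod.natCast_self]

lemma xgen_triple_prod (m a b c : ℕ) (h : a + b + c = m) :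
    xgen m ^ a * xgen m ^ b * xgen m ^ c = 1 := by
  rw [← pow_add, ← pow_add, h, xgen_pow_card]

namespace BGCyclic

open Multiplicative

variable (k : ℕ)

instance : NeZero (2*k+2) := ⟨by omega⟩

abbrev Gc (k : ℕ) := Multiplicative (ZMod (2*k+2))

lemma xgen_pow (n j : ℕ) : xgen n ^ j = Multiplicative.ofAdd ((j : ZMod n)) := by
  rw [xgen, ← ofAdd_nsmul]
  congr 1
  simp [nsmul_eq_mul]

noncomputable def E (a : ZMod (2*k+2)) : ConjClasses (Gc k) →₀ ℤ :=
  Finsupp.single (ConjClasses.mk (Multiplicative.ofAdd a)) 1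

def T (a : ZMod (2*k+2)) : Fin k → ℤ := fun j =>
  (a.val : ℤ) - (k+1) * (if a.val ≤ k then (if j.val + 2 ≤ a.val then 1 else 0)
    else 1 + (if 2*k+1 ≤ a.val + j.val then 1 else 0))

lemma T_zero : T k 0 = 0 := by
  funext j
  have h : (0 : ZMod (2*k+2)).val = 0 := ZMod.val_zero
  simp [T, h]

lemma T_neg (a : ZMod (2*k+2)) : T k a + T k (-a) = 0 := by
  rcases eq_or_ne a 0 with rfl | ha
  · rw [neg_zero, T_zero]; simp
  · funext j
    have hj : (j : ℕ) < k := j.isLt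
    have hv : a.val < 2*k+2 := ZMod.val_lt a
    have hv0 : a.val ≠ 0 := fun h => ha ((ZMod.val_eq_zero a).mp h)
    have hneg : (-a).val = 2*k+2 - a.val := by rw [ZMod.neg_val]; simp [ha]
    simp only [T, Pi.add_apply, Pi.zero_apply, hneg]
    split_ifs <;> omega

end BGCyclic
namespace BGCyclic
open Multiplicative
variable (k : ℕ)

def Tc : ConjClasses (Gc k) → (Fin k → ℤ) :=
  Quotient.lift (fun g => T k (Multiplicative.toAdd g))
    (fun a b (h : IsConj a b) => by rw [isConj_iff_eq.mp h])

noncomputable def Lam : (ConjClasses (Gc k) →₀ ℤ) →+ (Fin k → ℤ) :=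
  Finsupp.liftAddHom (fun c => (zmultiplesHom _) (Tc k c))

@[simp] lemma Lam_single (g : Gc k) (z : ℤ) :
    Lam k (Finsupp.single (ConjClasses.mk g) z) = z • T k (Multiplicative.toAdd g) := by
  simp [Lam]
  rfl

@[simp] lemma Lam_E (a : ZMod (2*k+2)) : Lam k (E k a) = T k a := by
  rw [E]
  rw [Lam_single]
  simp

lemma Lam_eq_zero_of_mem_bRel {f : ConjClasses (Gc k) →₀ ℤ} (hf : f ∈ bRel (Gc k)) :
    Lam k f = 0 := by
  have hle : bRel (Gc k) ≤ (Lam k).ker := by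
    rw [bRel]
    apply (AddSubgroup.closure_le _).mpr
    rintro x (rfl | ⟨γ, rfl⟩)
    · simp [AddMonoidHom.mem_ker, T_zero]
    · simp only [SetLike.mem_coe, AddMonoidHom.mem_ker, map_add, Lam_single, one_smul, toAdd_inv]
      exact T_neg k _
  exact hle hf
end BGCyclic
namespace BGCyclic
open Multiplicative
variable (k : ℕ)

noncomputable def bv (i : Fin k) : ConjClasses (Gc k) →₀ ℤ :=
  bdatum (Gc k) [xgen (2*k+2), xgen (2*k+2) ^ ((i:ℕ)+1), xgen (2*k+2) ^ (2*k+2 - (i:ℕ) - 2)]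

lemma bv_mem (i : Fin k) : bv k i ∈ lambdaKer (Gc k) :=
  bdatum_triple_mem _ _ _ (by
    simpa using xgen_triple_prod (2*k+2) 1 ((i:ℕ)+1) (2*k+2-(i:ℕ)-2) (by have := i.isLt; omega))

lemma bdatum_triple (G : Type*) [Group G] (a b c : G) :
    bdatum G [a, b, c] = Finsupp.single (ConjClasses.mk a) 1
      + Finsupp.single (ConjClasses.mk b) 1 + Finsupp.single (ConjClasses.mk c) 1 := by
  simp [bdatum, add_assoc]

lemma bv_eq (i : Fin k) :
    bv k i = E k (((1:ℕ) : ZMod (2*k+2))) + E k ((((i:ℕ)+1 : ℕ)) : ZMod (2*k+2))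
      + E k (((2*k - (i:ℕ) : ℕ)) : ZMod (2*k+2)) := by
  have h2 : 2*k+2 - (i:ℕ) - 2 = 2*k - (i:ℕ) := by omega
  rw [bv, bdatum_triple, h2, E, E, E, xgen_pow, xgen_pow]
  norm_num [xgen]

lemma Lam_bv (i : Fin k) : Lam k (bv k i) = ((k:ℤ)+1) • Pi.single i 1 := by
  have hi : (i:ℕ) < k := i.isLt
  rw [bv_eq]
  haveI : NeZero (2*k+2) := ⟨by omega⟩
  have hv1 : (((1:ℕ) : ZMod (2*k+2))).val = 1 := ZMod.val_cast_of_lt (by omega)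
  have hv2 : ((((i:ℕ)+1 : ℕ) : ZMod (2*k+2))).val = (i:ℕ)+1 := ZMod.val_cast_of_lt (by omega)
  have hv3 : (((2*k - (i:ℕ) : ℕ) : ZMod (2*k+2))).val = 2*k - (i:ℕ) := ZMod.val_cast_of_lt (by omega)
  funext j
  have hj : (j : ℕ) < k := j.isLt
  simp only [map_add, Lam_E, Pi.add_apply, T, hv1, hv2, hv3, Pi.smul_apply, Pi.single_apply,
    smul_eq_mul, Fin.ext_iff]
  split_ifs <;> omega

end BGCyclic
namespace BGCyclic
open Multiplicative
variable (k : ℕ)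

noncomputable def S (k : ℕ) : AddSubgroup (ConjClasses (Gc k) →₀ ℤ) :=
  bRel (Gc k) ⊔ AddSubgroup.closure (Set.range (bv k))

lemma E_zero_mem : E k 0 ∈ bRel (Gc k) := by
  have h : E k 0 = Finsupp.single (ConjClasses.mk (1 : Gc k)) 1 := by rw [E, ofAdd_zero]
  rw [h]; exact AddSubgroup.subset_closure (Set.mem_insert _ _)

lemma E_pair_mem (a : ZMod (2*k+2)) : E k a + E k (-a) ∈ bRel (Gc k) := by
  apply AddSubgroup.subset_closure
  apply Set.mem_insert_of_mem
  exact ⟨Multiplicative.ofAdd a, by rw [E, E, ← ofAdd_neg]⟩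

lemma stepA (j : ℕ) (h1 : 1 ≤ j) : j ≤ k+1 → E k ((j : ℕ) : ZMod (2*k+2)) - j • E k 1 ∈ S k := by
  induction j, h1 using Nat.le_induction with
  | base =>
    intro _
    simp only [Nat.cast_one, one_nsmul, sub_self]
    exact (S k).zero_mem
  | succ j hj ih =>
    intro h2
    have hjk : j ≤ k := by omega
    have ihs := ih (by omega)
    have hbv : bv k ⟨j-1, by omega⟩ ∈ S k :=
      AddSubgroup.mem_sup_right (AddSubgroup.subset_closure ⟨⟨j-1, by omega⟩, rfl⟩)
    have hpair : E k (((j+1 : ℕ)) : ZMod (2*k+2)) + E k (-((j+1 : ℕ) : ZMod (2*k+2))) ∈ S k :=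
      AddSubgroup.mem_sup_left (E_pair_mem k _)
    have hcast : ((2*k - (j-1) : ℕ) : ZMod (2*k+2)) = -((j+1 : ℕ) : ZMod (2*k+2)) := by
      rw [show 2*k - (j-1) = 2*k+2 - (j+1) from by omega, Nat.cast_sub (by omega)]
      simp [ZMod.natCast_self]
    have hone : ((1:ℕ) : ZMod (2*k+2)) = (1 : ZMod (2*k+2)) := Nat.cast_one
    have hbveq : bv k ⟨j-1, by omega⟩
        = E k 1 + E k ((j : ℕ) : ZMod (2*k+2)) + E k (-((j+1 : ℕ) : ZMod (2*k+2))) := by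
      rw [bv_eq, hone, show ((⟨j-1, by omega⟩ : Fin k) : ℕ) = j - 1 from rfl,
        show (j-1)+1 = j from by omega, hcast]
    have heq : E k ((j+1 : ℕ) : ZMod (2*k+2)) - (j+1) • E k 1
        = (E k ((j:ℕ) : ZMod (2*k+2)) - j • E k 1) - bv k ⟨j-1, by omega⟩
          + (E k ((j+1 : ℕ) : ZMod (2*k+2)) + E k (-((j+1 : ℕ) : ZMod (2*k+2)))) := by
      rw [hbveq, succ_nsmul]
      abel
    rw [heq]
    exact add_mem (sub_mem ihs hbv) hpair

end BGCyclic
namespace BGCyclic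
open Multiplicative
variable (k : ℕ)

lemma stepB (a : ZMod (2*k+2)) :
    ∃ n : ℤ, ((n : ℤ) : ZMod (2*k+2)) = a ∧ E k a - n • E k 1 ∈ S k := by
  have hva : ((a.val : ℕ) : ZMod (2*k+2)) = a := by
    simp [ZMod.natCast_val, ZMod.cast_id]
  rcases eq_or_ne a 0 with rfl | ha
  · exact ⟨0, by simp, by simpa [S] using AddSubgroup.mem_sup_left (E_zero_mem k)⟩
  · have hv : a.val < 2*k+2 := ZMod.val_lt a
    have hv0 : a.val ≠ 0 := fun h => ha ((ZMod.val_eq_zero a).mp h)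
    rcases le_or_gt a.val (k+1) with h | h
    · refine ⟨(a.val : ℤ), ?_, ?_⟩
      · rw [Int.cast_natCast, hva]
      · have hs := stepA k a.val (by omega) h
        rw [hva] at hs
        rw [natCast_zsmul]
        exact hs
    · refine ⟨(a.val : ℤ) - (2*k+2), ?_, ?_⟩
      · push_cast [hva]
        have hz : (2*(k:ZMod (2*k+2)) + 2) = 0 := by
          have h0 := ZMod.natCast_self (2*k+2)
          push_cast at h0
          exact h0
        rw [hz, sub_zero]
      · have hnegval : (-a).val = 2*k+2 - a.val := by rw [ZMod.neg_val]; simp [ha]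
        have hcast : ((2*k+2 - a.val : ℕ) : ZMod (2*k+2)) = -a := by
          rw [Nat.cast_sub hv.le]
          simp [ZMod.natCast_self, hva]
        have hs := stepA k (2*k+2 - a.val) (by omega) (by omega)
        rw [hcast] at hs
        have hpair : E k a + E k (-a) ∈ S k := AddSubgroup.mem_sup_left (E_pair_mem k a)
        have heq : E k a - ((a.val : ℤ) - (2*k+2)) • E k 1
            = (E k a + E k (-a)) - (E k (-a) - (2*k+2 - a.val) • E k 1) := by
          have hc : ((a.val : ℤ) - (2*k+2)) • E k 1 = -((2*k+2 - a.val : ℕ) • E k 1) := by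
            rw [← natCast_zsmul, ← neg_smul]
            congr 1
            omega
          rw [hc]; abel
        rw [heq]
        exact sub_mem hpair hs

lemma lemC : ((2*k+2) : ℕ) • E k 1 ∈ S k := by
  have h1 := stepA k (k+1) (by omega) (le_refl _)
  have hzero : ((2*k+2 : ℕ) : ZMod (2*k+2)) = 0 := ZMod.natCast_self _
  have hself : -(((k+1 : ℕ)) : ZMod (2*k+2)) = (((k+1 : ℕ)) : ZMod (2*k+2)) := by
    have h2 : (((k+1:ℕ)) : ZMod (2*k+2)) + (((k+1:ℕ)) : ZMod (2*k+2)) = 0 := by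
      rw [← Nat.cast_add, show (k+1)+(k+1) = 2*k+2 from by ring, hzero]
    rw [neg_eq_of_add_eq_zero_left h2]
  have hpair : E k (((k+1:ℕ)) : ZMod (2*k+2)) + E k (((k+1:ℕ)) : ZMod (2*k+2)) ∈ S k := by
    have h3 : E k (((k+1:ℕ)) : ZMod (2*k+2)) + E k (-(((k+1:ℕ)) : ZMod (2*k+2))) ∈ S k :=
      AddSubgroup.mem_sup_left (E_pair_mem k _)
    rwa [hself] at h3
  have heq : ((2*k+2):ℕ) • E k 1
      = (E k (((k+1:ℕ)) : ZMod (2*k+2)) + E k (((k+1:ℕ)) : ZMod (2*k+2)))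
        - 2 • (E k (((k+1:ℕ)) : ZMod (2*k+2)) - (k+1) • E k 1) := by
    have hsm : ((2*k+2):ℕ) • E k 1 = 2 • ((k+1) • E k 1) := by
      rw [← mul_nsmul, show (k+1)*2 = 2*k+2 from by ring]
    rw [hsm, smul_sub]
    abel
  rw [heq]
  exact sub_mem hpair (nsmul_mem h1 2)

end BGCyclic
namespace BGCyclic
open Multiplicative
variable (k : ℕ)

def ac : ConjClasses (Gc k) → ZMod (2*k+2) :=
  Quotient.lift Multiplicative.toAdd
    (fun a b (h : IsConj a b) => by rw [isConj_iff_eq.mp h])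

noncomputable def Dhom : (ConjClasses (Gc k) →₀ ℤ) →+ ZMod (2*k+2) :=
  Finsupp.liftAddHom (fun c => (zmultiplesHom _) (ac k c))

@[simp] lemma Dhom_single (g : Gc k) (z : ℤ) :
    Dhom k (Finsupp.single (ConjClasses.mk g) z) = z • Multiplicative.toAdd g := by
  simp [Dhom]
  rfl

lemma Dhom_eq_zero {f : ConjClasses (Gc k) →₀ ℤ} (hf : f ∈ lambdaKer (Gc k)) :
    Dhom k f = 0 := by
  have key : ∀ f : ConjClasses (Gc k) →₀ ℤ,
      Dhom k f = Multiplicative.toAdd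
        ((Abelianization.lift (MonoidHom.id (Gc k)))
          (Additive.toMul (degMap (Gc k) f))) := by
    intro f
    induction f using Finsupp.induction_linear with
    | zero => simp
    | add f g hf hg => rw [map_add, hf, hg, map_add, toMul_add, map_mul, toAdd_mul]
    | single c z =>
      obtain ⟨g, rfl⟩ := ConjClasses.mk_surjective c
      rw [Dhom_single, degMap_single]
      simp [toMul_zsmul, map_zpow, toAdd_zpow]
  have h0 : degMap (Gc k) f = 0 := hf
  rw [key f, h0]
  simp

lemma mem_S_of_mem_lambdaKer {f : ConjClasses (Gc k) →₀ ℤ} (hf : f ∈ lambdaKer (Gc k)) :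
    f ∈ S k := by
  have key : ∀ f : ConjClasses (Gc k) →₀ ℤ,
      ∃ n : ℤ, ((n : ℤ) : ZMod (2*k+2)) = Dhom k f ∧ f - n • E k 1 ∈ S k := by
    intro f
    induction f using Finsupp.induction_linear with
    | zero => exact ⟨0, by simp, by simpa using (S k).zero_mem⟩
    | add f g hf hg =>
      obtain ⟨n1, e1, m1⟩ := hf
      obtain ⟨n2, e2, m2⟩ := hg
      refine ⟨n1 + n2, by rw [map_add, ← e1, ← e2]; push_cast; ring, ?_⟩
      have heq : f + g - (n1 + n2) • E k 1 = (f - n1 • E k 1) + (g - n2 • E k 1) := by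
        rw [add_smul]; abel
      rw [heq]
      exact add_mem m1 m2
    | single c z =>
      obtain ⟨g, rfl⟩ := ConjClasses.mk_surjective c
      obtain ⟨n0, e0, m0⟩ := stepB k (Multiplicative.toAdd g)
      refine ⟨z * n0, ?_, ?_⟩
      · rw [Dhom_single, Int.cast_mul, e0, zsmul_eq_mul]
      · have heq : Finsupp.single (ConjClasses.mk g) z - (z * n0) • E k 1
            = z • (E k (Multiplicative.toAdd g) - n0 • E k 1) := by
          simp only [smul_sub, smul_smul, E, ofAdd_toAdd, Finsupp.smul_single,
            smul_eq_mul, mul_one]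
        rw [heq]
        exact zsmul_mem m0 z
  obtain ⟨n, e, m⟩ := key f
  rw [Dhom_eq_zero k hf] at e
  obtain ⟨t, rfl⟩ : (((2*k+2 : ℕ) : ℤ)) ∣ n := by
    have hd := (ZMod.intCast_zmod_eq_zero_iff_dvd n (2*k+2)).mp e
    exact_mod_cast hd
  have h2 : ((((2*k+2 : ℕ) : ℤ)) * t) • E k 1 = t • (((2*k+2):ℕ) • E k 1) := by
    rw [← natCast_zsmul (E k 1) (2*k+2), smul_smul]
    congr 1
    ring
  have heq : f = (f - ((((2*k+2 : ℕ) : ℤ)) * t) • E k 1) + ((((2*k+2 : ℕ) : ℤ)) * t) • E k 1 := by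
    abel
  rw [heq]
  refine add_mem m ?_
  rw [h2]
  exact zsmul_mem (lemC k) t

end BGCyclic
namespace BGCyclic
open Multiplicative
variable (k : ℕ)

noncomputable def bvK (i : Fin k) : lambdaKer (Gc k) := ⟨bv k i, bv_mem k i⟩

noncomputable def Fl : (Fin k → ℤ) →ₗ[ℤ] BG (Gc k) where
  toFun c := ∑ i, c i • (QuotientAddGroup.mk (bvK k i) : BG (Gc k))
  map_add' c d := by simp only [Pi.add_apply, add_zsmul, Finset.sum_add_distrib]
  map_smul' z c := by
    simp only [Pi.smul_apply, smul_eq_mul, mul_zsmul, RingHom.id_apply, Finset.smul_sum]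

lemma Fl_apply (c : Fin k → ℤ) :
    Fl k c = ∑ i, c i • (QuotientAddGroup.mk (bvK k i) : BG (Gc k)) := rfl

noncomputable def LamBar : BG (Gc k) →+ (Fin k → ℤ) :=
  QuotientAddGroup.lift _ ((Lam k).comp (lambdaKer (Gc k)).subtype) (by
    intro x hx
    have hx' : (x : ConjClasses (Gc k) →₀ ℤ) ∈ bRel (Gc k) :=
      (AddSubgroup.mem_addSubgroupOf).mp hx
    simpa using Lam_eq_zero_of_mem_bRel k hx')

@[simp] lemma LamBar_mk (x : lambdaKer (Gc k)) :
    LamBar k (QuotientAddGroup.mk x) = Lam k (x : ConjClasses (Gc k) →₀ ℤ) := rfl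

lemma LamBar_Fl (c : Fin k → ℤ) : LamBar k (Fl k c) = ((k:ℤ)+1) • c := by
  have h1 : LamBar k (Fl k c) = ∑ i, c i • (((k:ℤ)+1) • Pi.single i 1) := by
    rw [show Fl k c = ∑ i, c i • (QuotientAddGroup.mk (bvK k i) : BG (Gc k)) from rfl,
      map_sum]
    refine Finset.sum_congr rfl (fun i _ => ?_)
    rw [map_zsmul, LamBar_mk]
    rw [show ((bvK k i : lambdaKer (Gc k)) : ConjClasses (Gc k) →₀ ℤ) = bv k i from rfl,
      Lam_bv]
  rw [h1]
  funext j
  simp only [Finset.sum_apply, Pi.smul_apply, Pi.single_apply, smul_eq_mul, mul_ite,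
    mul_one, mul_zero]
  rw [Finset.sum_ite_eq Finset.univ j (fun i => c i * ((k:ℤ)+1))]
  simp [mul_comm]

lemma Fl_inj : Function.Injective (Fl k) := by
  rw [injective_iff_map_eq_zero]
  intro c hc
  have h := congrArg (LamBar k) hc
  rw [LamBar_Fl, map_zero] at h
  have hk : ((k:ℤ)+1) ≠ 0 := by positivity
  rcases smul_eq_zero.mp h with h' | h'
  · exact absurd h' hk
  · exact h'

lemma Fl_surj : Function.Surjective (Fl k) := by
  intro y
  obtain ⟨z, rfl⟩ := QuotientAddGroup.mk'_surjective _ y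
  have hz : (z : ConjClasses (Gc k) →₀ ℤ) ∈ S k := mem_S_of_mem_lambdaKer k z.2
  rw [S, AddSubgroup.mem_sup] at hz
  obtain ⟨r, hr, s, hs, hrs⟩ := hz
  have hsK : s ∈ lambdaKer (Gc k) := by
    have hle : AddSubgroup.closure (Set.range (bv k)) ≤ lambdaKer (Gc k) :=
      (AddSubgroup.closure_le _).mpr (by rintro x ⟨i, rfl⟩; exact bv_mem k i)
    exact hle hs
  have hspan : s ∈ Submodule.span ℤ (Set.range (bv k)) := by
    rw [← Submodule.mem_toAddSubgroup, Submodule.span_int_eq_addSubgroupClosure]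
    exact hs
  obtain ⟨c, hc⟩ := (Submodule.mem_span_range_iff_exists_fun ℤ).mp hspan
  refine ⟨c, ?_⟩
  have hsum : (⟨s, hsK⟩ : lambdaKer (Gc k)) = ∑ i, c i • bvK k i := by
    apply Subtype.ext
    push_cast [bvK]
    exact hc.symm
  have h1 : Fl k c = QuotientAddGroup.mk (⟨s, hsK⟩ : lambdaKer (Gc k)) := by
    rw [hsum,
      show (QuotientAddGroup.mk (∑ i, c i • bvK k i) : BG (Gc k))
        = QuotientAddGroup.mk' _ (∑ i, c i • bvK k i) from rfl,
      map_sum]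
    rw [show Fl k c = ∑ i, c i • (QuotientAddGroup.mk (bvK k i) : BG (Gc k)) from rfl]
    refine Finset.sum_congr rfl (fun i _ => ?_)
    rw [map_zsmul]
    rfl
  rw [h1]
  have hdiff : -(⟨s, hsK⟩ : lambdaKer (Gc k)) + z
      ∈ (bRel (Gc k)).addSubgroupOf (lambdaKer (Gc k)) := by
    rw [AddSubgroup.mem_addSubgroupOf]
    have hco : ((-(⟨s, hsK⟩ : lambdaKer (Gc k)) + z : lambdaKer (Gc k))
        : ConjClasses (Gc k) →₀ ℤ) = r := by
      have : -s + (z : ConjClasses (Gc k) →₀ ℤ) = r := by rw [← hrs]; abel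
      simpa using this
    rw [hco]
    exact hr
  exact (QuotientAddGroup.eq).mpr hdiff

noncomputable def basisB : Module.Basis (Fin k) ℤ (BG (Gc k)) :=
  Module.Basis.ofEquivFun (LinearEquiv.ofBijective (Fl k) ⟨Fl_inj k, Fl_surj k⟩).symm

lemma basisB_apply (i : Fin k) :
    basisB k i = (QuotientAddGroup.mk (bvK k i) : BG (Gc k)) := by
  have h := congrFun (Module.Basis.coe_ofEquivFun
    (LinearEquiv.ofBijective (Fl k) ⟨Fl_inj k, Fl_surj k⟩).symm) i
  rw [basisB, h]
  show (LinearEquiv.ofBijective (Fl k) ⟨Fl_inj k, Fl_surj k⟩).symm.symm (Pi.single i 1) = _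
  rw [LinearEquiv.symm_symm]
  show Fl k (Pi.single i 1) = _
  rw [Fl_apply]
  rw [Finset.sum_eq_single i]
  · simp
  · intro j _ hj
    simp [Pi.single_eq_of_ne hj]
  · intro h
    exact absurd (Finset.mem_univ i) h

end BGCyclic
/-- For even `m`, `𝔹_{C_m}` is free abelian of rank `m/2 - 1`, with basis
the elements `[x, x^i, x^(m-i-1)]`, `i = 1, …, m/2 - 1`. -/
theorem BG_cyclic_even_free_with_basis (m : ℕ) (hpos : 0 < m) (hm : Even m) :
    ∃ B : Module.Basis (Fin (m / 2 - 1)) ℤ (BG (Multiplicative (ZMod m))),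
      ∀ i : Fin (m / 2 - 1),
        B i = bmk [xgen m, xgen m ^ ((i : ℕ) + 1), xgen m ^ (m - (i : ℕ) - 2)]
          (bdatum_triple_mem _ _ _
            (by
              simpa using xgen_triple_prod m 1 ((i : ℕ) + 1) (m - (i : ℕ) - 2)
                (by have := i.isLt; omega))) := by
  obtain ⟨k, rfl⟩ : ∃ k, m = 2*k+2 := by
    obtain ⟨t, ht⟩ := hm
    exact ⟨t-1, by omega⟩
  have hfin : (2*k+2)/2 - 1 = k := by omega
  refine ⟨(BGCyclic.basisB k).reindex (finCongr hfin.symm), fun i => ?_⟩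
  rw [Module.Basis.reindex_apply, BGCyclic.basisB_apply]
  rfl
end
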